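/- arXiv:2309.08034 — 4 statements merged into one kernel-verified Lean document; each statement's English description precedes it below -/
import Mathlib

section
/- Let σ = co{x₀, x₁, …, xₙ} ⊂ ℝⁿ be an n-simplex (the convex hull of n+1 affinely independent points), and let g : U → ℝⁿ be twice continuously differentiable on an open set U containing σ. Let β ≥ max over p,q,r ∈ {1,…,n} and ξ ∈ σ of |∂²g⁽ᵖ⁾/∂x⁽q⁾∂x⁽r⁾ evaluated at ξ|, and for each j ∈ {0,…,n} set c_j = n‖x_j − x₀‖₂ (max_{k∈{1,…,n}} ‖x_k − x₀‖₂ + ‖x_j − x₀‖₂). Then for every x ∈ σ, writing x = Σ_{j=0}^{n} λ_j x_j with λ_j ≥ 0 and Σ_{j=0}^{n} λ_j = 1, one has ‖g(x) − Σ_{j=0}^{n} λ_j g(x_j)‖_∞ ≤ (1/2) β Σ_{j=0}^{n} λ_j c_j. -/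
open Matrix

/-- Euclidean norm on `ℝⁿ` (represented as `Fin n → ℝ`). -/
noncomputable def enorm2 {n : ℕ} (x : Fin n → ℝ) : ℝ := Real.sqrt (∑ i, x i ^ 2)

/-- Second partial derivative `∂²f/∂x⁽q⁾∂x⁽r⁾` of `f : ℝⁿ → ℝ` at `ξ`. -/
noncomputable def pd2 {n : ℕ} (f : (Fin n → ℝ) → ℝ) (q r : Fin n) (ξ : Fin n → ℝ) : ℝ :=
  fderiv ℝ (fun y => fderiv ℝ f y (Pi.single q 1)) ξ (Pi.single r 1)


open Set

lemma pd2_eq {n : ℕ} (h : (Fin n → ℝ) → ℝ) {ξ : Fin n → ℝ}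
    (hf1 : DifferentiableAt ℝ (fderiv ℝ h) ξ) (q r : Fin n) :
    pd2 h q r ξ = fderiv ℝ (fderiv ℝ h) ξ (Pi.single r 1) (Pi.single q 1) := by
  unfold pd2
  rw [fderiv_clm_apply hf1 (differentiableAt_const _)]
  simp

lemma fderiv2_bound {n : ℕ} (h : (Fin n → ℝ) → ℝ) {ξ : Fin n → ℝ}
    (hf1 : DifferentiableAt ℝ (fderiv ℝ h) ξ) (v : Fin n → ℝ) {β : ℝ}
    (hβ : ∀ q r : Fin n, |pd2 h q r ξ| ≤ β) :
    |fderiv ℝ (fderiv ℝ h) ξ v v| ≤ β * (∑ q, |v q|) ^ 2 := by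
  have hv : v = ∑ r, v r • (Pi.single r 1 : Fin n → ℝ) := by
    ext i
    simp [Pi.single_apply]
  have key : fderiv ℝ (fderiv ℝ h) ξ v v = ∑ r, ∑ q, v r * (v q * pd2 h r q ξ) := by
    conv_lhs => rw [hv]
    simp only [_root_.map_sum, _root_.map_smul, ContinuousLinearMap.sum_apply,
      ContinuousLinearMap.smul_apply, smul_eq_mul]
    refine Finset.sum_congr rfl fun r _ => ?_
    rw [Finset.mul_sum]
    refine Finset.sum_congr rfl fun q _ => ?_
    rw [pd2_eq h hf1 r q]
  rw [key]
  calc |∑ r, ∑ q, v r * (v q * pd2 h r q ξ)|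
      ≤ ∑ r, ∑ q, |v r| * (|v q| * β) := by
        refine (Finset.abs_sum_le_sum_abs _ _).trans (Finset.sum_le_sum fun r _ => ?_)
        refine (Finset.abs_sum_le_sum_abs _ _).trans (Finset.sum_le_sum fun q _ => ?_)
        rw [abs_mul, abs_mul]
        exact mul_le_mul_of_nonneg_left
          (mul_le_mul_of_nonneg_left (hβ r q) (abs_nonneg _)) (abs_nonneg _)
    _ = β * (∑ q, |v q|) ^ 2 := by
        simp only [← Finset.mul_sum, ← Finset.sum_mul]
        ring

lemma enorm2_eq_norm {n : ℕ} (w : Fin n → ℝ) :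
    enorm2 w = ‖(WithLp.linearEquiv 2 ℝ (Fin n → ℝ)).symm w‖ := by
  rw [show ((WithLp.linearEquiv 2 ℝ (Fin n → ℝ)).symm w : EuclideanSpace ℝ (Fin n)) =
    (WithLp.equiv 2 (Fin n → ℝ)).symm w from rfl]
  rw [EuclideanSpace.norm_eq]
  unfold enorm2
  congr 1
  refine Finset.sum_congr rfl fun i _ => ?_
  rw [show ((WithLp.equiv 2 (Fin n → ℝ)).symm w).ofLp i = w i from rfl, Real.norm_eq_abs, sq_abs]

lemma enorm2_nonneg {n : ℕ} (w : Fin n → ℝ) : 0 ≤ enorm2 w := Real.sqrt_nonneg _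

lemma enorm2_zero {n : ℕ} : enorm2 (0 : Fin n → ℝ) = 0 := by simp [enorm2]

lemma enorm2_comb {n N : ℕ} (lam : Fin N → ℝ) (hlam0 : ∀ j, 0 ≤ lam j)
    (w : Fin N → (Fin n → ℝ)) :
    enorm2 (∑ j, lam j • w j) ≤ ∑ j, lam j * enorm2 (w j) := by
  rw [enorm2_eq_norm, _root_.map_sum]
  refine (norm_sum_le _ _).trans (le_of_eq (Finset.sum_congr rfl fun j _ => ?_))
  rw [_root_.map_smul, norm_smul, Real.norm_eq_abs, abs_of_nonneg (hlam0 j), enorm2_eq_norm]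

lemma l1_sq_le {n : ℕ} (w : Fin n → ℝ) :
    (∑ q, |w q|) ^ 2 ≤ n * enorm2 w ^ 2 := by
  have h1 : enorm2 w ^ 2 = ∑ q, w q ^ 2 := by
    rw [enorm2, Real.sq_sqrt]
    positivity
  rw [h1]
  have := sq_sum_le_card_mul_sum_sq (s := (Finset.univ : Finset (Fin n))) (f := fun q => |w q|)
  simpa [sq_abs] using this

lemma taylor_aux {n : ℕ} (h : (Fin n → ℝ) → ℝ) {U : Set (Fin n → ℝ)} (hU : IsOpen U)
    (hh : ContDiffOn ℝ 2 h U) {s : Set (Fin n → ℝ)} (hs : Convex ℝ s) (hsU : s ⊆ U)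
    {a b : Fin n → ℝ} (ha : a ∈ s) (hb : b ∈ s) {β : ℝ}
    (hβ : ∀ q r : Fin n, ∀ ξ ∈ s, |pd2 h q r ξ| ≤ β) :
    |h b - h a - fderiv ℝ h a (b - a)| ≤ 1 / 2 * β * (∑ q, |b q - a q|) ^ 2 := by
  set v : Fin n → ℝ := b - a with hvdef
  set γ : ℝ → (Fin n → ℝ) := fun t => a + t • v with hγdef
  have hγs : ∀ t ∈ Icc (0:ℝ) 1, γ t ∈ s := fun t ht => hs.add_smul_sub_mem ha hb ht
  have hγU : ∀ t ∈ Icc (0:ℝ) 1, γ t ∈ U := fun t ht => hsU (hγs t ht)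
  have hf1 : ContDiffOn ℝ 1 (fderiv ℝ h) U := hh.fderiv_of_isOpen hU le_rfl
  have hdh : ∀ ξ ∈ U, DifferentiableAt ℝ h ξ := fun ξ hξ =>
    ((hh.differentiableOn (by norm_num)).differentiableAt (hU.mem_nhds hξ))
  have hdf1 : ∀ ξ ∈ U, DifferentiableAt ℝ (fderiv ℝ h) ξ := fun ξ hξ =>
    ((hf1.differentiableOn one_ne_zero).differentiableAt (hU.mem_nhds hξ))
  have hγd : ∀ t : ℝ, HasDerivAt γ v t := by
    intro t
    have : HasDerivAt (fun t : ℝ => t • v) ((1:ℝ) • v) t := (hasDerivAt_id t).smul_const v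
    rw [one_smul] at this; exact this.const_add a
  set φ : ℝ → ℝ := fun t => h (γ t) with hφdef
  set φ' : ℝ → ℝ := fun t => fderiv ℝ h (γ t) v with hφ'def
  set φ'' : ℝ → ℝ := fun t => fderiv ℝ (fderiv ℝ h) (γ t) v v with hφ''def
  have hφd : ∀ t ∈ Icc (0:ℝ) 1, HasDerivAt φ (φ' t) t := fun t ht =>
    ((hdh _ (hγU t ht)).hasFDerivAt.comp_hasDerivAt t (hγd t))
  have hφ'd : ∀ t ∈ Icc (0:ℝ) 1, HasDerivAt φ' (φ'' t) t := by
    intro t ht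
    have h2 : HasDerivAt (fun u => fderiv ℝ h (γ u)) (fderiv ℝ (fderiv ℝ h) (γ t) v) t :=
      (hdf1 _ (hγU t ht)).hasFDerivAt.comp_hasDerivAt t (hγd t)
    exact ((ContinuousLinearMap.apply ℝ ℝ v).hasFDerivAt.comp_hasDerivAt t h2)
  have hud : UniqueDiffOn ℝ (Icc (0:ℝ) 1) := uniqueDiffOn_Icc one_pos
  have hEq : ∀ t ∈ Icc (0:ℝ) 1, iteratedDerivWithin 1 φ (Icc (0:ℝ) 1) t = φ' t := by
    intro t ht
    rw [iteratedDerivWithin_one]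
    rw [(hφd t ht).differentiableAt.derivWithin (hud t ht)]
    exact (hφd t ht).deriv
  have hφC : ContDiffOn ℝ 1 φ (Icc (0:ℝ) 1) := by
    have hγC : ContDiff ℝ 1 γ := contDiff_const.add (contDiff_id.smul contDiff_const)
    exact (hh.of_le (by norm_num)).comp hγC.contDiffOn hγU
  have hf' : DifferentiableOn ℝ (iteratedDerivWithin 1 φ (Icc (0:ℝ) 1)) (Ioo (0:ℝ) 1) := by
    have : DifferentiableOn ℝ φ' (Ioo (0:ℝ) 1) := fun t ht =>
      (hφ'd t (Ioo_subset_Icc_self ht)).differentiableAt.differentiableWithinAt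
    exact this.congr fun t ht => hEq t (Ioo_subset_Icc_self ht)
  obtain ⟨t', ht', hT⟩ := taylor_mean_remainder_lagrange (n := 1) (x₀ := 0) (x := 1) zero_ne_one
    (by rw [uIcc_of_le zero_le_one]; exact_mod_cast hφC)
    (by rw [uIcc_of_le zero_le_one, uIoo_of_le zero_le_one]; exact hf')
  rw [uIoo_of_le zero_le_one] at ht'
  rw [uIcc_of_le zero_le_one] at hT
  have ht'I : t' ∈ Icc (0:ℝ) 1 := Ioo_subset_Icc_self ht'
  have hit2 : iteratedDerivWithin 2 φ (Icc (0:ℝ) 1) t' = φ'' t' := by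
    rw [show (2:ℕ) = 1 + 1 from rfl, iteratedDerivWithin_succ]
    rw [derivWithin_congr hEq (hEq t' ht'I)]
    rw [(hφ'd t' ht'I).differentiableAt.derivWithin (hud t' ht'I)]
    exact (hφ'd t' ht'I).deriv
  have htaylor : taylorWithinEval φ 1 (Icc (0:ℝ) 1) 0 1 = φ 0 + φ' 0 := by
    rw [taylor_within_apply]
    simp [Finset.sum_range_succ, hEq 0 (by norm_num : (0:ℝ) ∈ Icc (0:ℝ) 1)]
  have hb1 : φ 1 = h b := by simp [hφdef, hγdef, hvdef]
  have ha0 : φ 0 = h a := by simp [hφdef, hγdef]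
  have hD : φ' 0 = fderiv ℝ h a v := by simp [hφ'def, hγdef]
  have hbound : |φ'' t'| ≤ β * (∑ q, |v q|) ^ 2 :=
    fderiv2_bound h (hdf1 _ (hγU t' ht'I)) v (fun q r => hβ q r _ (hγs t' ht'I))
  have h2 : iteratedDerivWithin (1 + 1) φ (Icc (0:ℝ) 1) t' = φ'' t' := hit2
  rw [htaylor, h2] at hT
  norm_num [Nat.factorial] at hT
  have key : h b - h a - fderiv ℝ h a v = φ'' t' / 2 := by
    rw [← hb1, ← ha0, ← hD]
    linarith [hT]
  have hsumeq : (∑ q, |b q - a q|) = ∑ q, |v q| := by simp [hvdef]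
  calc |h b - h a - fderiv ℝ h a v| = |φ'' t'| / 2 := by rw [key, abs_div]; norm_num
    _ ≤ β * (∑ q, |v q|) ^ 2 / 2 := by linarith [hbound]
    _ = 1 / 2 * β * (∑ q, |b q - a q|) ^ 2 := by rw [hsumeq]; ring

/-- (Proposition 2.2 / Lemma 2.3 of Giesl–Hafstein.) For a `C²` function
`g` on an open set containing the simplex `σ = co{x₀,…,xₙ}`, with `β` bounding all second
partials of the components of `g` on `σ` and
`c_j = n ‖x_j − x₀‖₂ (max_k ‖x_k − x₀‖₂ + ‖x_j − x₀‖₂)`, every convex combination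
`x = Σ λ_j x_j` satisfies `‖g(x) − Σ λ_j g(x_j)‖_∞ ≤ ½ β Σ λ_j c_j`. -/
theorem cpa_interpolation_error_bound
    {n : ℕ} (hn : 0 < n)
    (x : Fin (n + 1) → (Fin n → ℝ)) (hx : AffineIndependent ℝ x)
    (U : Set (Fin n → ℝ)) (hU : IsOpen U)
    (hσU : convexHull ℝ (Set.range x) ⊆ U)
    (g : (Fin n → ℝ) → (Fin n → ℝ)) (hg : ContDiffOn ℝ 2 g U)
    (β : ℝ)
    (hβ : ∀ (p q r : Fin n), ∀ ξ ∈ convexHull ℝ (Set.range x),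
      |pd2 (fun z => g z p) q r ξ| ≤ β)
    (c : Fin (n + 1) → ℝ)
    (hc : ∀ j, c j = n * enorm2 (x j - x 0) *
      ((⨆ k : Fin n, enorm2 (x k.succ - x 0)) + enorm2 (x j - x 0)))
    (lam : Fin (n + 1) → ℝ) (hlam0 : ∀ j, 0 ≤ lam j) (hlam1 : ∑ j, lam j = 1) :
    ‖g (∑ j, lam j • x j) - ∑ j, lam j • g (x j)‖ ≤ (1 / 2) * β * ∑ j, lam j * c j := by
  classical
  set σ := convexHull ℝ (Set.range x) with hσ
  have hσc : Convex ℝ σ := convex_convexHull ℝ _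
  have hxσ : ∀ j, x j ∈ σ := fun j => subset_convexHull ℝ _ ⟨j, rfl⟩
  set X := ∑ j, lam j • x j with hX
  have hXσ : X ∈ σ := hσc.sum_mem (fun j _ => hlam0 j) hlam1 (fun j _ => hxσ j)
  set M : ℝ := ⨆ k : Fin n, enorm2 (x k.succ - x 0) with hM
  have hbdd : BddAbove (Set.range fun k : Fin n => enorm2 (x k.succ - x 0)) :=
    Set.Finite.bddAbove (Set.finite_range _)
  have hM0 : 0 ≤ M := le_ciSup_of_le hbdd ⟨0, hn⟩ (enorm2_nonneg _)
  have heM : ∀ j, enorm2 (x j - x 0) ≤ M := by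
    intro j
    induction j using Fin.cases with
    | zero => simpa [enorm2_zero] using hM0
    | succ k => exact le_ciSup hbdd k
  have he0 : ∀ j : Fin (n+1), 0 ≤ enorm2 (x j - x 0) := fun j => enorm2_nonneg _
  have hsum : X - x 0 = ∑ j, lam j • (x j - x 0) := by
    simp [smul_sub, Finset.sum_sub_distrib, ← Finset.sum_smul, hlam1, hX]
  have hEX : enorm2 (X - x 0) ≤ ∑ j, lam j * enorm2 (x j - x 0) := by
    rw [hsum]; exact enorm2_comb lam hlam0 _
  have hE0 : 0 ≤ ∑ j, lam j * enorm2 (x j - x 0) :=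
    Finset.sum_nonneg fun j _ => mul_nonneg (hlam0 j) (he0 j)
  have hEM : (∑ j, lam j * enorm2 (x j - x 0)) ≤ M := by
    calc (∑ j, lam j * enorm2 (x j - x 0)) ≤ ∑ j, lam j * M :=
          Finset.sum_le_sum fun j _ => mul_le_mul_of_nonneg_left (heM j) (hlam0 j)
      _ = M := by rw [← Finset.sum_mul, hlam1, one_mul]
  have hβ0 : 0 ≤ β := le_trans (abs_nonneg _) (hβ ⟨0, hn⟩ ⟨0, hn⟩ ⟨0, hn⟩ (x 0) (hxσ 0))
  have hc0 : ∀ j, 0 ≤ c j := by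
    intro j
    rw [hc j]
    exact mul_nonneg (mul_nonneg (by positivity) (he0 j)) (add_nonneg hM0 (he0 j))
  have hcomp : ∀ p : Fin n,
      |(g X - ∑ j, lam j • g (x j)) p| ≤ 1 / 2 * β * ∑ j, lam j * c j := by
    intro p
    set h : (Fin n → ℝ) → ℝ := fun z => g z p with hh
    have hhC : ContDiffOn ℝ 2 h U :=
      (ContinuousLinearMap.proj (R := ℝ) (φ := fun _ : Fin n => ℝ) p).contDiff.comp_contDiffOn hg
    set T : (Fin n → ℝ) → ℝ := fun z => h z - h (x 0) - fderiv ℝ h (x 0) (z - x 0) with hT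
    have hTb : ∀ z ∈ σ, |T z| ≤ 1 / 2 * β * (∑ q, |z q - x 0 q|) ^ 2 := by
      intro z hz
      have := taylor_aux h hU hhC hσc hσU (hxσ 0) hz (fun q r ξ hξ => hβ p q r ξ hξ)
      simpa [hT] using this
    have hTX : |T X| ≤ 1 / 2 * β *
        ((n : ℝ) * ((∑ j, lam j * enorm2 (x j - x 0)) * M)) := by
      refine (hTb X hXσ).trans (mul_le_mul_of_nonneg_left ?_ (by positivity))
      have h1 : (∑ q, |X q - x 0 q|) ^ 2 ≤ (n : ℝ) * enorm2 (X - x 0) ^ 2 := by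
        simpa using l1_sq_le (X - x 0)
      refine h1.trans (mul_le_mul_of_nonneg_left ?_ (by positivity))
      rw [sq]
      exact mul_le_mul hEX (le_trans hEX hEM) (enorm2_nonneg _) hE0
    have hTj : ∀ j, |T (x j)| ≤ 1 / 2 * β *
        ((n : ℝ) * (enorm2 (x j - x 0) * enorm2 (x j - x 0))) := by
      intro j
      refine (hTb (x j) (hxσ j)).trans (mul_le_mul_of_nonneg_left ?_ (by positivity))
      have h1 : (∑ q, |x j q - x 0 q|) ^ 2 ≤ (n : ℝ) * enorm2 (x j - x 0) ^ 2 := by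
        simpa using l1_sq_le (x j - x 0)
      simpa [sq] using h1
    have hlin : (fderiv ℝ h (x 0)) (X - x 0) = ∑ j, lam j * (fderiv ℝ h (x 0)) (x j - x 0) := by
      rw [hsum, _root_.map_sum]
      simp
    have hdecomp : (g X - ∑ j, lam j • g (x j)) p = T X - ∑ j, lam j * T (x j) := by
      simp only [Pi.sub_apply, Finset.sum_apply, Pi.smul_apply, smul_eq_mul, hT]
      simp only [mul_sub, Finset.sum_sub_distrib, ← Finset.sum_mul, hlam1, one_mul, hlin]
      ring
    calc |(g X - ∑ j, lam j • g (x j)) p| = |T X - ∑ j, lam j * T (x j)| := by rw [hdecomp]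
      _ ≤ |T X| + |∑ j, lam j * T (x j)| := abs_sub _ _
      _ ≤ |T X| + ∑ j, lam j * |T (x j)| := by
          refine add_le_add_right ((Finset.abs_sum_le_sum_abs _ _).trans
            (le_of_eq (Finset.sum_congr rfl fun j _ => ?_))) _
          rw [abs_mul, abs_of_nonneg (hlam0 j)]
      _ ≤ 1 / 2 * β * ((n : ℝ) * ((∑ j, lam j * enorm2 (x j - x 0)) * M))
          + ∑ j, lam j * (1 / 2 * β * ((n : ℝ) * (enorm2 (x j - x 0) * enorm2 (x j - x 0)))) :=
          add_le_add hTX (Finset.sum_le_sum fun j _ =>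
            mul_le_mul_of_nonneg_left (hTj j) (hlam0 j))
      _ = 1 / 2 * β * ∑ j, lam j * c j := by
          rw [Finset.sum_mul, Finset.mul_sum, Finset.mul_sum, ← Finset.sum_add_distrib,
            Finset.mul_sum]
          refine Finset.sum_congr rfl fun j _ => ?_
          rw [hc j]
          ring
  have hRHS0 : 0 ≤ 1 / 2 * β * ∑ j, lam j * c j :=
    mul_nonneg (mul_nonneg (by norm_num) hβ0)
      (Finset.sum_nonneg fun j _ => mul_nonneg (hlam0 j) (hc0 j))
  rw [pi_norm_le_iff_of_nonneg hRHS0]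
  intro p
  rw [Real.norm_eq_abs]
  exact hcomp p
end

section
/- Let σ = co{x₀, …, xₙ} ⊂ ℝⁿ be an n-simplex, let φ : U → ℝ and ζ : U → ℝᵐ be twice continuously differentiable on an open set U containing σ, and define for each x the symmetric (1+m)×(1+m) matrix M(x) = [[φ(x), ζ(x)ᵀ], [ζ(x), −I_m]]. Let β ≥ max over q,r ∈ {1,…,n} and ξ ∈ σ of |∂²φ/∂x⁽q⁾∂x⁽r⁾(ξ)|, and for each k ∈ {1,…,m} let μ_k ≥ max over q,r ∈ {1,…,n} and ξ ∈ σ of |∂²ζ⁽ᵏ⁾/∂x⁽q⁾∂x⁽r⁾(ξ)|. For j ∈ {0,…,n} set c_j = n · max_{υ ∈ {0,…,n}} ‖x_j − x_υ‖₂² and E(x_j) = [[(1/2)(β c_j + Σ_{k=1}^{m} μ_k² c_j²), 0], [0, (1/2) I_m]]. Then for every x ∈ σ, writing x = Σ_{j=0}^{n} λ_j x_j as a convex combination of the vertices, the matrix inequality M(x) − Σ_{j=0}^{n} λ_j M(x_j) ⪯ Σ_{j=0}^{n} λ_j E(x_j) holds. -/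
open Matrix

/-- The LMI `M(x) = [[φ(x), ζ(x)ᵀ], [ζ(x), −I_m]]`. -/
def Mlmi {n m : ℕ} (φ : (Fin n → ℝ) → ℝ) (ζ : (Fin n → ℝ) → (Fin m → ℝ))
    (x : Fin n → ℝ) : Matrix (Fin 1 ⊕ Fin m) (Fin 1 ⊕ Fin m) ℝ :=
  Matrix.fromBlocks
    (Matrix.of fun _ _ => φ x) (Matrix.of fun _ k => ζ x k)
    (Matrix.of fun k _ => ζ x k) (-1)

/-- The error-bound matrix `E = [[½(β c + Σ_k μ_k² c²), 0], [0, ½ I_m]]`. -/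
noncomputable def Elmi {m : ℕ} (β : ℝ) (μ : Fin m → ℝ) (c : ℝ) :
    Matrix (Fin 1 ⊕ Fin m) (Fin 1 ⊕ Fin m) ℝ :=
  Matrix.fromBlocks
    (Matrix.of fun _ _ => (1 / 2) * (β * c + ∑ k, μ k ^ 2 * c ^ 2)) 0
    0 ((1 / 2 : ℝ) • 1)

open intervalIntegral Set in
lemma taylor1d {g g' g'' : ℝ → ℝ} {C : ℝ}
    (h1 : ∀ t ∈ Set.Icc (0:ℝ) 1, HasDerivAt g (g' t) t)
    (h2 : ∀ t ∈ Set.Icc (0:ℝ) 1, HasDerivAt g' (g'' t) t)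
    (hC : ∀ t ∈ Set.Icc (0:ℝ) 1, |g'' t| ≤ C) :
    |g 1 - g 0 - g' 0| ≤ C / 2 := by
  have huIcc : Set.uIcc (0:ℝ) 1 = Set.Icc 0 1 := Set.uIcc_of_le zero_le_one
  have hg'cont : ContinuousOn g' (Set.Icc (0:ℝ) 1) := fun t ht =>
    (h2 t ht).continuousAt.continuousWithinAt
  have hint : IntervalIntegrable g' MeasureTheory.volume 0 1 :=
    (hg'cont.mono (by rw [huIcc])).intervalIntegrable
  have h0 : ∫ t in (0:ℝ)..1, g' t = g 1 - g 0 :=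
    integral_eq_sub_of_hasDerivAt (fun t ht => h1 t (by rwa [huIcc] at ht)) hint
  have hMVT : ∀ t ∈ Set.Icc (0:ℝ) 1, |g' t - g' 0| ≤ C * t := by
    intro t ht
    have := (convex_Icc (0:ℝ) t).norm_image_sub_le_of_norm_hasDerivWithin_le
      (f := g') (f' := g'') (C := C)
      (fun s hs => (h2 s ⟨hs.1, hs.2.trans ht.2⟩).hasDerivWithinAt)
      (fun s hs => by
        rw [Real.norm_eq_abs]; exact hC s ⟨hs.1, hs.2.trans ht.2⟩)
      (Set.left_mem_Icc.2 ht.1) (Set.right_mem_Icc.2 ht.1)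
    simpa [Real.norm_eq_abs, abs_of_nonneg ht.1] using this
  have key : g 1 - g 0 - g' 0 = ∫ t in (0:ℝ)..1, (g' t - g' 0) := by
    rw [intervalIntegral.integral_sub hint intervalIntegrable_const, h0,
      intervalIntegral.integral_const]
    simp
  rw [key]
  have hb : IntervalIntegrable (fun t : ℝ => C * t) MeasureTheory.volume 0 1 :=
    (continuous_const.mul continuous_id).intervalIntegrable 0 1
  have hC0 : 0 ≤ C := le_trans (abs_nonneg _) (hC 0 (Set.left_mem_Icc.2 zero_le_one))
  have hval : ∫ t in (0:ℝ)..1, C * t = C / 2 := by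
    rw [intervalIntegral.integral_const_mul, integral_id]; ring
  have hle : |∫ t in (0:ℝ)..1, (g' t - g' 0)| ≤ |∫ t in (0:ℝ)..1, C * t| := by
    have := intervalIntegral.norm_integral_le_abs_of_norm_le (μ := MeasureTheory.volume)
      (f := fun t => g' t - g' 0) (g := fun t => C * t) (a := 0) (b := 1)
      ?_ hb
    · simpa [Real.norm_eq_abs] using this
    · refine (MeasureTheory.ae_restrict_iff' measurableSet_uIoc).2 (Filter.Eventually.of_forall ?_)
      intro t ht
      have ht' : t ∈ Set.Icc (0:ℝ) 1 := by
        rw [Set.uIoc_of_le zero_le_one] at ht; exact ⟨le_of_lt ht.1, ht.2⟩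
      simpa [Real.norm_eq_abs] using hMVT t ht'
  refine hle.trans ?_
  rw [hval, abs_of_nonneg (by linarith)]

section MV
variable {n : ℕ} {f : (Fin n → ℝ) → ℝ} {U : Set (Fin n → ℝ)}

/-- basis expansion of a vector -/
lemma basis_expand (v : Fin n → ℝ) : ∑ q, v q • (Pi.single q 1 : Fin n → ℝ) = v := by
  ext i
  simp [Finset.sum_apply, Pi.single_apply]

lemma fderiv_apply_expand {g : (Fin n → ℝ) → ℝ} {y : Fin n → ℝ} (v : Fin n → ℝ) :
    fderiv ℝ g y v = ∑ q, v q * fderiv ℝ g y (Pi.single q 1) := by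
  conv_lhs => rw [← basis_expand v]
  rw [map_sum]
  simp [smul_eq_mul]

/-- differentiability of y ↦ fderiv f y (e_q) on open U for C² f -/
lemma diff_partial (hU : IsOpen U) (hf : ContDiffOn ℝ 2 f U) (w : Fin n → ℝ) :
    DifferentiableOn ℝ (fun y => fderiv ℝ f y w) U := by
  have h1 : ContDiffOn ℝ 1 (fderiv ℝ f) U := hf.fderiv_of_isOpen hU (by norm_num)
  exact fun y hy => ((h1.differentiableOn one_ne_zero y hy).clm_apply (differentiableWithinAt_const w))

/-- second directional derivative expansion into pd2 -/
lemma second_dir_expand (hU : IsOpen U) (hf : ContDiffOn ℝ 2 f U) (v : Fin n → ℝ)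
    {ξ : Fin n → ℝ} (hξ : ξ ∈ U) :
    fderiv ℝ (fun y => fderiv ℝ f y v) ξ v = ∑ q, ∑ r, v q * v r * pd2 f q r ξ := by
  have hdq : ∀ w : Fin n → ℝ, DifferentiableAt ℝ (fun y => fderiv ℝ f y w) ξ := by
    intro w
    exact ((diff_partial hU hf w) ξ hξ).differentiableAt (hU.mem_nhds hξ)
  have h1 : (fun y => fderiv ℝ f y v) =ᶠ[nhds ξ] fun y => ∑ q, v q * fderiv ℝ f y (Pi.single q 1) :=
    Filter.Eventually.of_forall (fun y => fderiv_apply_expand v)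
  rw [h1.fderiv_eq]
  rw [fderiv_fun_sum (fun q _ => ((hdq (Pi.single q 1)).const_mul (v q)))]
  rw [ContinuousLinearMap.sum_apply]
  refine Finset.sum_congr rfl fun q _ => ?_
  rw [fderiv_const_mul (hdq (Pi.single q 1)), ContinuousLinearMap.smul_apply,
    fderiv_apply_expand v, smul_eq_mul, Finset.mul_sum]
  refine Finset.sum_congr rfl fun r _ => ?_
  simp only [pd2]; ring

end MV

lemma second_order_bound {n : ℕ} {f : (Fin n → ℝ) → ℝ} {U : Set (Fin n → ℝ)}
    (hU : IsOpen U) (hf : ContDiffOn ℝ 2 f U) {p v : Fin n → ℝ}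
    (hseg : ∀ t ∈ Set.Icc (0:ℝ) 1, p + t • v ∈ U) {B : ℝ}
    (hB : ∀ t ∈ Set.Icc (0:ℝ) 1, |∑ q, ∑ r, v q * v r * pd2 f q r (p + t • v)| ≤ B) :
    |f (p + v) - f p - fderiv ℝ f p v| ≤ B / 2 := by
  set L : ℝ → (Fin n → ℝ) := fun t => p + t • v with hL
  have hLd : ∀ t : ℝ, HasDerivAt L v t := by
    intro t
    have := ((hasDerivAt_id t).smul_const v).const_add p
    rw [one_smul] at this; exact this
  have hdiff : ∀ t ∈ Set.Icc (0:ℝ) 1, DifferentiableAt ℝ f (L t) := fun t ht =>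
    (hf.differentiableOn (by norm_num) (L t) (hseg t ht)).differentiableAt
      (hU.mem_nhds (hseg t ht))
  have h1 : ∀ t ∈ Set.Icc (0:ℝ) 1, HasDerivAt (fun s => f (L s))
      (fderiv ℝ f (L t) v) t := fun t ht =>
    ((hdiff t ht).hasFDerivAt).comp_hasDerivAt t (hLd t)
  have h2 : ∀ t ∈ Set.Icc (0:ℝ) 1, HasDerivAt (fun s => fderiv ℝ f (L s) v)
      (∑ q, ∑ r, v q * v r * pd2 f q r (L t)) t := by
    intro t ht
    have hF : DifferentiableAt ℝ (fun y => fderiv ℝ f y v) (L t) :=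
      ((diff_partial hU hf v) (L t) (hseg t ht)).differentiableAt (hU.mem_nhds (hseg t ht))
    have := (hF.hasFDerivAt).comp_hasDerivAt t (hLd t)
    rwa [second_dir_expand hU hf v (hseg t ht)] at this
  have := taylor1d h1 h2 hB
  simpa [hL] using this

lemma comb_bound {n N : ℕ} {f : (Fin n → ℝ) → ℝ} {U : Set (Fin n → ℝ)}
    (hU : IsOpen U) (hf : ContDiffOn ℝ 2 f U)
    (x : Fin N → (Fin n → ℝ)) (hσU : convexHull ℝ (Set.range x) ⊆ U)
    (lam : Fin N → ℝ) (hlam0 : ∀ j, 0 ≤ lam j) (hlam1 : ∑ j, lam j = 1)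
    {B : ℝ} (hB : ∀ q r, ∀ ξ ∈ convexHull ℝ (Set.range x), |pd2 f q r ξ| ≤ B)
    (hB0 : 0 ≤ B)
    (d : Fin N → ℝ)
    (hd : ∀ j, (n:ℝ) * ∑ q, (x j q - (∑ i, lam i • x i) q)^2 ≤ d j) :
    |f (∑ j, lam j • x j) - ∑ j, lam j * f (x j)| ≤ (B * ∑ j, lam j * d j) / 2 := by
  set xs : Fin n → ℝ := ∑ j, lam j • x j with hxs
  have hxsmem : xs ∈ convexHull ℝ (Set.range x) := by
    rw [hxs, ← Finset.centerMass_eq_of_sum_1 _ _ hlam1]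
    exact Finset.centerMass_mem_convexHull _ (fun i _ => hlam0 i) (by rw [hlam1]; norm_num)
      (fun i _ => Set.mem_range_self i)
  have hxmem : ∀ j, x j ∈ convexHull ℝ (Set.range x) := fun j =>
    subset_convexHull ℝ _ (Set.mem_range_self j)
  have hseg : ∀ j, ∀ t ∈ Set.Icc (0:ℝ) 1, xs + t • (x j - xs) ∈ convexHull ℝ (Set.range x) := by
    intro j t ht
    exact (convex_convexHull ℝ _).add_smul_sub_mem hxsmem (hxmem j) ht
  -- per-j remainder bound
  have hper : ∀ j, |f (x j) - f xs - fderiv ℝ f xs (x j - xs)| ≤ B * d j / 2 := by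
    intro j
    have hseg' : ∀ t ∈ Set.Icc (0:ℝ) 1, xs + t • (x j - xs) ∈ U := fun t ht =>
      hσU (hseg j t ht)
    have hquad : ∀ t ∈ Set.Icc (0:ℝ) 1,
        |∑ q, ∑ r, (x j - xs) q * (x j - xs) r * pd2 f q r (xs + t • (x j - xs))| ≤ B * d j := by
      intro t ht
      set v := x j - xs
      set ξ := xs + t • v
      have hξ := hseg j t ht
      calc |∑ q, ∑ r, v q * v r * pd2 f q r ξ|
          ≤ ∑ q, ∑ r, |v q * v r * pd2 f q r ξ| := by
            exact (Finset.abs_sum_le_sum_abs _ _).trans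
              (Finset.sum_le_sum fun q _ => Finset.abs_sum_le_sum_abs _ _)
        _ ≤ ∑ q, ∑ r, |v q| * |v r| * B := by
            refine Finset.sum_le_sum fun q _ => Finset.sum_le_sum fun r _ => ?_
            rw [abs_mul, abs_mul]
            exact mul_le_mul_of_nonneg_left (hB q r ξ hξ)
              (mul_nonneg (abs_nonneg _) (abs_nonneg _))
        _ = (∑ q, |v q|)^2 * B := by
            rw [sq, Finset.sum_mul_sum, Finset.sum_mul]
            refine Finset.sum_congr rfl fun q _ => ?_
            rw [Finset.sum_mul]
        _ ≤ ((n:ℝ) * ∑ q, v q ^ 2) * B := by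
            refine mul_le_mul_of_nonneg_right ?_ hB0
            have := Finset.sum_mul_sq_le_sq_mul_sq Finset.univ (fun _ : Fin n => (1:ℝ))
              (fun q => |v q|)
            simpa [sq_abs, Finset.card_univ] using this
        _ ≤ d j * B := by
            refine mul_le_mul_of_nonneg_right ?_ hB0
            simpa [v] using hd j
        _ = B * d j := mul_comm _ _
    have := second_order_bound hU hf hseg' hquad
    simpa using this
  -- gradient cancellation
  have hcancel : ∑ j, lam j • (x j - xs) = 0 := by
    have : ∑ j, lam j • (x j - xs) = (∑ j, lam j • x j) - (∑ j, lam j) • xs := by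
      rw [Finset.sum_smul]
      rw [← Finset.sum_sub_distrib]
      refine Finset.sum_congr rfl fun j _ => ?_
      rw [smul_sub]
    rw [this, hlam1, one_smul, ← hxs, sub_self]
  have hLsum : f xs - ∑ j, lam j * f (x j)
      = - ∑ j, lam j * (f (x j) - f xs - fderiv ℝ f xs (x j - xs)) := by
    have hmap : ∑ j, lam j * fderiv ℝ f xs (x j - xs)
        = fderiv ℝ f xs (∑ j, lam j • (x j - xs)) := by
      rw [map_sum]
      exact Finset.sum_congr rfl fun j _ => by rw [_root_.map_smul]; rfl
    have h0 : ∑ j, lam j * fderiv ℝ f xs (x j - xs) = 0 := by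
      rw [hmap, hcancel, map_zero]
    have hsplit : ∑ j, lam j * (f (x j) - f xs - fderiv ℝ f xs (x j - xs))
        = (∑ j, lam j * f (x j)) - (∑ j, lam j) * f xs
          - ∑ j, lam j * fderiv ℝ f xs (x j - xs) := by
      rw [Finset.sum_mul]
      rw [← Finset.sum_sub_distrib, ← Finset.sum_sub_distrib]
      exact Finset.sum_congr rfl fun j _ => by ring
    rw [hsplit, h0, hlam1]
    ring
  rw [hLsum, abs_neg]
  calc |∑ j, lam j * (f (x j) - f xs - fderiv ℝ f xs (x j - xs))|
      ≤ ∑ j, |lam j * (f (x j) - f xs - fderiv ℝ f xs (x j - xs))| :=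
        Finset.abs_sum_le_sum_abs _ _
    _ ≤ ∑ j, lam j * (B * d j / 2) := by
        refine Finset.sum_le_sum fun j _ => ?_
        rw [abs_mul, abs_of_nonneg (hlam0 j)]
        exact mul_le_mul_of_nonneg_left (hper j) (hlam0 j)
    _ = (B * ∑ j, lam j * d j) / 2 := by
        rw [Finset.mul_sum]
        refine Eq.trans (Finset.sum_congr rfl fun j _ => ?_) (Finset.sum_div _ _ _).symm
        ring

lemma block_psd {m : ℕ} (A : ℝ) (b : Fin m → ℝ) (hA : 2 * ∑ k, (b k)^2 ≤ A) :
    (Matrix.fromBlocks (Matrix.of fun _ _ => A) (Matrix.of fun (_ : Fin 1) k => -b k)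
      (Matrix.of fun k (_ : Fin 1) => -b k)
      ((1/2:ℝ) • (1 : Matrix (Fin m) (Fin m) ℝ))).PosSemidef := by
  set M : Matrix (Fin 1 ⊕ Fin m) (Fin 1 ⊕ Fin m) ℝ :=
    Matrix.fromBlocks (Matrix.of fun _ _ => A) (Matrix.of fun (_ : Fin 1) k => -b k)
      (Matrix.of fun k (_ : Fin 1) => -b k) ((1/2:ℝ) • (1 : Matrix (Fin m) (Fin m) ℝ)) with hM
  refine Matrix.PosSemidef.of_dotProduct_mulVec_nonneg ?_ ?_
  · rw [Matrix.IsHermitian]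
    ext i j
    rcases i with i | i <;> rcases j with j | j <;>
      simp [hM, Matrix.conjTranspose_apply, Matrix.one_apply, eq_comm]
  · intro v
    have hexp : dotProduct (star v) (M *ᵥ v)
        = A * (v (Sum.inl 0))^2 - 2 * (v (Sum.inl 0)) * ∑ k, b k * v (Sum.inr k)
          + (1/2) * ∑ k, (v (Sum.inr k))^2 := by
      simp only [dotProduct, Matrix.mulVec, Fintype.sum_sum_type, star_trivial, hM,
        Matrix.fromBlocks_apply₁₁, Matrix.fromBlocks_apply₁₂,
        Matrix.fromBlocks_apply₂₁, Matrix.fromBlocks_apply₂₂, Matrix.of_apply,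
        Matrix.smul_apply, Matrix.one_apply, smul_eq_mul, dotProduct]
      rw [Fin.sum_univ_one]
      have h2 : ∀ k : Fin m, ∑ l, ((1/2:ℝ) * if k = l then 1 else 0) * v (Sum.inr l)
          = (1/2) * v (Sum.inr k) := by
        intro k
        rw [Finset.sum_eq_single k]
        · simp
        · intro l _ hl; rw [if_neg (Ne.symm hl)]; ring
        · simp
      simp only [Fin.sum_univ_one, h2]
      have e0 : ∑ k : Fin m, -b k * v (Sum.inr k) = -∑ k, b k * v (Sum.inr k) := by
        rw [← Finset.sum_neg_distrib]
        exact Finset.sum_congr rfl fun k _ => by ring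
      have e1 : ∑ k : Fin m, v (Sum.inr k) * (-b k * v (Sum.inl 0) + 1/2 * v (Sum.inr k))
          = -(∑ k, b k * v (Sum.inr k)) * v (Sum.inl 0) + 1/2 * ∑ k, v (Sum.inr k)^2 := by
        rw [Finset.sum_congr rfl (fun k _ => (by ring :
          v (Sum.inr k) * (-b k * v (Sum.inl 0) + 1/2 * v (Sum.inr k))
            = -(b k * v (Sum.inr k)) * v (Sum.inl 0) + 1/2 * v (Sum.inr k)^2)),
          Finset.sum_add_distrib, ← Finset.sum_neg_distrib, ← Finset.sum_mul,
          Finset.sum_neg_distrib, ← Finset.mul_sum]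
      rw [e0, e1]
      ring
    rw [hexp]
    have hk : ∀ k : Fin m, 2 * v (Sum.inl 0) * (b k * v (Sum.inr k))
        ≤ 2 * b k ^2 * v (Sum.inl 0)^2 + (1/2) * v (Sum.inr k)^2 := by
      intro k
      nlinarith [sq_nonneg (2 * b k * v (Sum.inl 0) - v (Sum.inr k))]
    have hsum : 2 * v (Sum.inl 0) * ∑ k, b k * v (Sum.inr k)
        ≤ (2 * ∑ k, b k ^2) * v (Sum.inl 0)^2 + (1/2) * ∑ k, v (Sum.inr k)^2 := by
      have hL : 2 * v (Sum.inl 0) * ∑ k, b k * v (Sum.inr k)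
          = ∑ k, 2 * v (Sum.inl 0) * (b k * v (Sum.inr k)) := Finset.mul_sum _ _ _
      have hR : (2 * ∑ k, b k ^2) * v (Sum.inl 0)^2 + (1/2) * ∑ k, v (Sum.inr k)^2
          = ∑ k, (2 * b k ^2 * v (Sum.inl 0)^2 + (1/2) * v (Sum.inr k)^2) := by
        rw [Finset.sum_add_distrib, Finset.mul_sum, Finset.sum_mul, Finset.mul_sum]
      rw [hL, hR]
      exact Finset.sum_le_sum fun k _ => hk k
    have hAv : (2 * ∑ k, b k ^2) * v (Sum.inl 0)^2 ≤ A * v (Sum.inl 0)^2 :=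
      mul_le_mul_of_nonneg_right hA (sq_nonneg _)
    linarith

lemma jensen_sq {N : ℕ} (lam c : Fin N → ℝ) (h0 : ∀ j, 0 ≤ lam j)
    (h1 : ∑ j, lam j = 1) : (∑ j, lam j * c j)^2 ≤ ∑ j, lam j * c j ^ 2 := by
  have key := Finset.sum_mul_sq_le_sq_mul_sq Finset.univ
    (fun j => Real.sqrt (lam j)) (fun j => Real.sqrt (lam j) * c j)
  have e1 : ∀ j : Fin N, Real.sqrt (lam j) * (Real.sqrt (lam j) * c j) = lam j * c j := by
    intro j; rw [← mul_assoc, Real.mul_self_sqrt (h0 j)]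
  have e2 : ∀ j : Fin N, Real.sqrt (lam j) ^ 2 = lam j := fun j => Real.sq_sqrt (h0 j)
  have e3 : ∀ j : Fin N, (Real.sqrt (lam j) * c j) ^ 2 = lam j * c j ^ 2 := by
    intro j; rw [mul_pow, e2 j]
  rw [Finset.sum_congr rfl (fun j _ => e1 j), Finset.sum_congr rfl (fun j _ => e2 j),
    Finset.sum_congr rfl (fun j _ => e3 j), h1, one_mul] at key
  exact key

lemma geom_bound {n N : ℕ} (x : Fin N → (Fin n → ℝ)) (lam : Fin N → ℝ)
    (h0 : ∀ j, 0 ≤ lam j) (h1 : ∑ j, lam j = 1) (j : Fin N) :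
    ∑ q, (x j q - (∑ i, lam i • x i) q)^2 ≤ ⨆ υ : Fin N, enorm2 (x j - x υ) ^ 2 := by
  have hNe : Nonempty (Fin N) := ⟨j⟩
  set S := ⨆ υ : Fin N, enorm2 (x j - x υ) ^ 2 with hS
  have henorm : ∀ υ, enorm2 (x j - x υ) ^ 2 = ∑ q, (x j q - x υ q)^2 := by
    intro υ
    rw [enorm2, Real.sq_sqrt (by positivity)]
    exact Finset.sum_congr rfl fun q _ => by simp
  have hle : ∀ υ, ∑ q, (x j q - x υ q)^2 ≤ S := by
    intro υ
    rw [← henorm υ]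
    exact le_ciSup (f := fun υ : Fin N => enorm2 (x j - x υ) ^ 2)
      (Set.Finite.bddAbove (Set.finite_range _)) υ
  have hrep : ∀ q, x j q - (∑ i, lam i • x i) q = ∑ υ, lam υ * (x j q - x υ q) := by
    intro q
    have : (∑ i, lam i • x i) q = ∑ i, lam i * x i q := by
      rw [Finset.sum_apply]; exact Finset.sum_congr rfl fun i _ => rfl
    rw [this, Finset.sum_congr rfl (fun υ _ => (mul_sub (lam υ) (x j q) (x υ q))),
      Finset.sum_sub_distrib, ← Finset.sum_mul, h1, one_mul]
  calc ∑ q, (x j q - (∑ i, lam i • x i) q)^2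
      = ∑ q, (∑ υ, lam υ * (x j q - x υ q))^2 :=
        Finset.sum_congr rfl fun q _ => by rw [hrep q]
    _ ≤ ∑ q, ∑ υ, lam υ * (x j q - x υ q)^2 :=
        Finset.sum_le_sum fun q _ => jensen_sq lam (fun υ => x j q - x υ q) h0 h1
    _ = ∑ υ, lam υ * ∑ q, (x j q - x υ q)^2 := by
        rw [Finset.sum_comm]
        exact Finset.sum_congr rfl fun υ _ => (Finset.mul_sum _ _ _).symm
    _ ≤ ∑ υ, lam υ * S :=
        Finset.sum_le_sum fun υ _ => mul_le_mul_of_nonneg_left (hle υ) (h0 υ)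
    _ = S := by rw [← Finset.sum_mul, h1, one_mul]


/-- (LMI error bound on a simplex, Theorem 1 of the paper, first part.)
For `C²` functions `φ, ζ` on an open set containing the simplex `σ = co{x₀,…,xₙ}`,
with `β, μ_k` bounding the second partials on `σ` and
`c_j = n · max_υ ‖x_j − x_υ‖₂²`, every convex combination `x = Σ λ_j x_j` satisfies
`M(x) − Σ λ_j M(x_j) ⪯ Σ λ_j E(x_j)` in the Loewner order. -/
theorem lmi_error_bound_on_simplex
    {n m : ℕ} (hn : 0 < n)
    (x : Fin (n + 1) → (Fin n → ℝ)) (hx : AffineIndependent ℝ x)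
    (U : Set (Fin n → ℝ)) (hU : IsOpen U)
    (hσU : convexHull ℝ (Set.range x) ⊆ U)
    (φ : (Fin n → ℝ) → ℝ) (hφ : ContDiffOn ℝ 2 φ U)
    (ζ : (Fin n → ℝ) → (Fin m → ℝ)) (hζ : ContDiffOn ℝ 2 ζ U)
    (β : ℝ)
    (hβ : ∀ (q r : Fin n), ∀ ξ ∈ convexHull ℝ (Set.range x), |pd2 φ q r ξ| ≤ β)
    (μ : Fin m → ℝ)
    (hμ : ∀ (k : Fin m) (q r : Fin n), ∀ ξ ∈ convexHull ℝ (Set.range x),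
      |pd2 (fun z => ζ z k) q r ξ| ≤ μ k)
    (c : Fin (n + 1) → ℝ)
    (hc : ∀ j, c j = n * (⨆ υ : Fin (n + 1), enorm2 (x j - x υ) ^ 2))
    (lam : Fin (n + 1) → ℝ) (hlam0 : ∀ j, 0 ≤ lam j) (hlam1 : ∑ j, lam j = 1) :
    ((∑ j, lam j • Elmi β μ (c j))
      - (Mlmi φ ζ (∑ j, lam j • x j) - ∑ j, lam j • Mlmi φ ζ (x j))).PosSemidef := by
  classical
  set xs : Fin n → ℝ := ∑ j, lam j • x j with hxs
  set S : ℝ := ∑ j, lam j * c j with hSdef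
  set A : ℝ := (∑ j, lam j * ((1/2) * (β * c j + ∑ k, μ k ^ 2 * c j ^ 2)))
      - (φ xs - ∑ j, lam j * φ (x j)) with hA
  set b : Fin m → ℝ := fun k => ζ xs k - ∑ j, lam j * ζ (x j) k with hb
  have hDeq : (∑ j, lam j • Elmi β μ (c j)) - (Mlmi φ ζ xs - ∑ j, lam j • Mlmi φ ζ (x j))
      = Matrix.fromBlocks (Matrix.of fun _ _ => A) (Matrix.of fun (_ : Fin 1) k => -b k)
        (Matrix.of fun k (_ : Fin 1) => -b k) ((1/2:ℝ) • (1 : Matrix (Fin m) (Fin m) ℝ)) := by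
    ext i i'
    rcases i with i | k <;> rcases i' with i' | l <;>
      simp only [Matrix.sub_apply, Matrix.sum_apply, Matrix.smul_apply, Elmi, Mlmi,
        Matrix.fromBlocks_apply₁₁, Matrix.fromBlocks_apply₁₂, Matrix.fromBlocks_apply₂₁,
        Matrix.fromBlocks_apply₂₂, Matrix.of_apply, Matrix.zero_apply, Matrix.neg_apply,
        Matrix.one_apply, smul_eq_mul, mul_zero, Finset.sum_const_zero, hA, hb]
    · ring
    · ring
    · by_cases h : k = l
      · rw [if_pos h]
        simp only [mul_one]
        rw [← Finset.sum_mul, hlam1, ← Finset.sum_mul, hlam1]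
        norm_num
      · rw [if_neg h]
        simp
  rw [hDeq]
  apply block_psd
  -- nonnegativity facts
  have hq0 : Fin n := ⟨0, hn⟩
  have hx0 : x 0 ∈ convexHull ℝ (Set.range x) := subset_convexHull ℝ _ (Set.mem_range_self 0)
  have hβ0 : 0 ≤ β := le_trans (abs_nonneg _) (hβ hq0 hq0 (x 0) hx0)
  have hμ0 : ∀ k, 0 ≤ μ k := fun k => le_trans (abs_nonneg _) (hμ k hq0 hq0 (x 0) hx0)
  have hd : ∀ j, (n:ℝ) * ∑ q, (x j q - (∑ i, lam i • x i) q)^2 ≤ c j := by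
    intro j
    rw [hc j]
    exact mul_le_mul_of_nonneg_left (geom_bound x lam hlam0 hlam1 j) (Nat.cast_nonneg n)
  have hφb : |φ xs - ∑ j, lam j * φ (x j)| ≤ (β * S) / 2 := by
    have := comb_bound hU hφ x hσU lam hlam0 hlam1 hβ hβ0 c hd
    simpa [hxs, hSdef] using this
  have hζb : ∀ k, |b k| ≤ (μ k * S) / 2 := by
    intro k
    have hζk : ContDiffOn ℝ 2 (fun z => ζ z k) U :=
      (ContinuousLinearMap.proj (R := ℝ) (φ := fun _ : Fin m => ℝ) k).contDiff.comp_contDiffOn hζ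
    have := comb_bound hU hζk x hσU lam hlam0 hlam1 (hμ k) (hμ0 k) c hd
    simpa [hb, hxs, hSdef] using this
  have hT : S ^ 2 ≤ ∑ j, lam j * c j ^ 2 := by
    rw [hSdef]; exact jensen_sq lam c hlam0 hlam1
  set T : ℝ := ∑ j, lam j * c j ^ 2 with hTdef
  set R : ℝ := ∑ k, μ k ^ 2 * T with hRdef
  -- rewrite the E-sum
  have hE : ∑ j, lam j * ((1/2) * (β * c j + ∑ k, μ k ^ 2 * c j ^ 2))
      = (1/2) * (β * S) + (1/2) * R := by
    have lhs_eq : ∀ j, lam j * ((1/2) * (β * c j + ∑ k, μ k ^ 2 * c j ^ 2))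
        = (1/2) * (β * (lam j * c j)) + ∑ k, (1/2) * (μ k ^ 2 * (lam j * c j ^ 2)) := by
      intro j
      have hstep : ∑ k, (1/2) * (μ k ^ 2 * (lam j * c j ^ 2))
          = (lam j * (1/2)) * ∑ k, μ k ^ 2 * c j ^ 2 := by
        rw [Finset.mul_sum]
        exact Finset.sum_congr rfl fun k _ => by ring
      rw [hstep]
      ring
    rw [Finset.sum_congr rfl fun j _ => lhs_eq j, Finset.sum_add_distrib]
    congr 1
    · rw [hSdef, Finset.mul_sum, Finset.mul_sum]
    · rw [Finset.sum_comm, hRdef, Finset.mul_sum]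
      refine Finset.sum_congr rfl fun k _ => ?_
      have hstep : ∑ j, (1/2) * (μ k ^ 2 * (lam j * c j ^ 2))
          = (1/2) * (μ k ^ 2 * ∑ j, lam j * c j ^ 2) := by
        rw [Finset.mul_sum, Finset.mul_sum]
      rw [hstep, hTdef]
  have hbk : ∀ k, (b k) ^ 2 ≤ μ k ^ 2 * S ^ 2 / 4 := by
    intro k
    calc (b k) ^ 2 = |b k| ^ 2 := (sq_abs _).symm
      _ ≤ ((μ k * S) / 2) ^ 2 := by
          apply pow_le_pow_left₀ (abs_nonneg _) (hζb k)
      _ = μ k ^ 2 * S ^ 2 / 4 := by ring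
  have hbsum : ∑ k, (b k) ^ 2 ≤ (∑ k, μ k ^ 2 * S ^ 2) / 4 := by
    rw [Finset.sum_div]
    exact Finset.sum_le_sum fun k _ => hbk k
  have hmuS : ∑ k, μ k ^ 2 * S ^ 2 ≤ R := by
    rw [hRdef]
    exact Finset.sum_le_sum fun k _ => mul_le_mul_of_nonneg_left hT (sq_nonneg _)
  have hAlow : (1/2) * R ≤ A := by
    rw [hA, hE]
    have := abs_le.1 hφb
    linarith [this.2]
  have h1 : 2 * ∑ k, (b k) ^ 2 ≤ R / 2 := by linarith
  have h2 : R / 2 ≤ A := by linarith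
  exact h1.trans h2
end

section
/- Let θ : ℝⁿ → ℝⁿ and ζ : ℝⁿ → ℝᵐ be twice continuously differentiable with θ(0) = 0 and ζ(0) = 0, let ε > 0, and let B_ε(0) be the closed Euclidean ball of radius ε about the origin in ℝⁿ. Let β_ε ≥ max over p,q,r ∈ {1,…,n} and ξ ∈ B_ε(0) of |∂²θ⁽ᵖ⁾/∂x⁽q⁾∂x⁽r⁾(ξ)|, and let μ_ε ≥ max over p ∈ {1,…,m}, q,r ∈ {1,…,n}, and ξ ∈ B_ε(0) of |∂²ζ⁽ᵖ⁾/∂x⁽q⁾∂x⁽r⁾(ξ)|. Let J_θ(0) and J_ζ(0) denote the Jacobian matrices of θ and ζ at 0. If the symmetric (n+m)×(n+m) block matrix M_ε = [[(1/2)(J_θ(0)ᵀ + J_θ(0) + (ε n^{3/2} β_ε + ε² n² m μ_ε²) I_n), J_ζ(0)ᵀ], [J_ζ(0), −(1/2) I_m]] is negative semidefinite, then ζ(x)ᵀζ(x) + (1/2)(xᵀθ(x) + θ(x)ᵀx) ≤ 0 for all x ∈ B_ε(0). -/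
open Matrix

/-- A real matrix is negative semidefinite iff its negation is positive semidefinite. -/
def Matrix.NegSemidef {ι : Type*} [Fintype ι] (M : Matrix ι ι ℝ) : Prop :=
  (-M).PosSemidef

section Aux

open Set

lemma aux_dot_self_nonneg {k : ℕ} (v : Fin k → ℝ) : 0 ≤ v ⬝ᵥ v :=
  Finset.sum_nonneg fun _ _ => mul_self_nonneg _

lemma aux_dot_transpose {k l : ℕ} (B : Matrix (Fin k) (Fin l) ℝ) (u : Fin l → ℝ)
    (w : Fin k → ℝ) : u ⬝ᵥ (Bᵀ *ᵥ w) = (B *ᵥ u) ⬝ᵥ w := by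
  simp only [dotProduct, Matrix.mulVec, Matrix.transpose_apply,
    Finset.mul_sum, Finset.sum_mul]
  rw [Finset.sum_comm]
  exact Finset.sum_congr rfl fun i _ => Finset.sum_congr rfl fun j _ => by ring

lemma aux_clm_apply_eq_sum {n : ℕ} (L : (Fin n → ℝ) →L[ℝ] ℝ) (x : Fin n → ℝ) :
    L x = ∑ r, x r * L (Pi.single r 1) := by
  conv_lhs => rw [show x = ∑ r, x r • (Pi.single r (1:ℝ) : Fin n → ℝ) by
    funext j; simp [Finset.sum_apply, Pi.single_apply]]
  rw [map_sum]; simp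

lemma aux_taylor_bound {n : ℕ} (f : (Fin n → ℝ) → ℝ) (hf : ContDiff ℝ 2 f)
    (x : Fin n → ℝ) (β : ℝ) (hβ0 : 0 ≤ β)
    (hβ : ∀ q r : Fin n, ∀ t : ℝ, t ∈ Set.Icc (0:ℝ) 1 → |pd2 f q r (t • x)| ≤ β) :
    |f x - f 0 - fderiv ℝ f 0 x| ≤ 1/2 * β * (∑ r, |x r|)^2 := by
  set S : ℝ := ∑ r, |x r| with hSdef
  set g : Fin n → (Fin n → ℝ) → ℝ := fun q y => fderiv ℝ f y (Pi.single q 1) with hgdef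
  have hg : ∀ q, ContDiff ℝ 1 (g q) := fun q =>
    (hf.fderiv_right (by norm_num)).clm_apply contDiff_const
  have hsm : ∀ t : ℝ, HasDerivAt (fun s : ℝ => s • x) x t := by
    intro t
    simpa using (hasDerivAt_id t).smul_const x
  have hφ : ∀ q (t : ℝ), HasDerivAt (fun s : ℝ => g q (s • x)) (fderiv ℝ (g q) (t • x) x) t := by
    intro q t
    exact (((hg q).differentiable (by norm_num) (t • x)).hasFDerivAt).comp_hasDerivAt t (hsm t)
  have hgd : ∀ q (ξ : Fin n → ℝ), fderiv ℝ (g q) ξ x = ∑ r, x r * pd2 f q r ξ := by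
    intro q ξ; exact aux_clm_apply_eq_sum _ x
  have hφbound : ∀ q, ∀ t ∈ Icc (0:ℝ) 1, ‖fderiv ℝ (g q) (t • x) x‖ ≤ β * S := by
    intro q t ht
    rw [hgd, Real.norm_eq_abs]
    calc |∑ r, x r * pd2 f q r (t • x)| ≤ ∑ r, |x r * pd2 f q r (t • x)| :=
          Finset.abs_sum_le_sum_abs _ _
      _ ≤ ∑ r, |x r| * β := by
          refine Finset.sum_le_sum fun r _ => ?_
          rw [abs_mul]
          exact mul_le_mul_of_nonneg_left (hβ q r t ht) (abs_nonneg _)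
      _ = (∑ r, |x r|) * β := by rw [← Finset.sum_mul]
      _ = β * S := by rw [hSdef]; ring
  have hseg : ∀ q, ∀ t ∈ Icc (0:ℝ) 1, |g q (t • x) - g q 0| ≤ β * S * t := by
    intro q t ht
    have := norm_image_sub_le_of_norm_deriv_le_segment'
      (f := fun s : ℝ => g q (s • x)) (f' := fun s => fderiv ℝ (g q) (s • x) x)
      (a := 0) (b := 1) (C := β * S)
      (fun s _ => ((hφ q s).hasDerivWithinAt)) (fun s hs => hφbound q s (Ico_subset_Icc_self hs))
      t ht
    simpa [Real.norm_eq_abs, zero_smul] using this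
  have hh : ∀ t : ℝ, HasDerivAt (fun s : ℝ => f (s • x)) (fderiv ℝ f (t • x) x) t := by
    intro t
    exact ((hf.differentiable (by norm_num) (t • x)).hasFDerivAt).comp_hasDerivAt t (hsm t)
  have hfd : ∀ ξ : Fin n → ℝ, fderiv ℝ f ξ x = ∑ q, x q * g q ξ := by
    intro ξ; exact aux_clm_apply_eq_sum _ x
  set v : ℝ → ℝ := fun t => fderiv ℝ f (t • x) x - fderiv ℝ f 0 x with hvdef
  have hu : ∀ t : ℝ, HasDerivAt (fun s : ℝ => f (s • x) - s * fderiv ℝ f 0 x) (v t) t := by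
    intro t
    have := (hh t).sub ((hasDerivAt_id' t).mul_const (fderiv ℝ f 0 x))
    rw [one_mul] at this
    exact this
  have hvcont : Continuous v := by
    have h1 : Continuous fun y : Fin n → ℝ => fderiv ℝ f y x :=
      ((hf.fderiv_right (m := 1) (by norm_num)).clm_apply contDiff_const).continuous
    exact ((h1.comp (continuous_id.smul continuous_const : Continuous fun t : ℝ => t • x)).sub
      continuous_const)
  have hvbound : ∀ t ∈ Icc (0:ℝ) 1, ‖v t‖ ≤ β * S^2 * t := by
    intro t ht
    have h0 : fderiv ℝ f 0 x = ∑ q, x q * g q 0 := hfd 0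
    rw [hvdef]
    simp only [hfd (t • x), h0, Real.norm_eq_abs, ← Finset.sum_sub_distrib]
    calc |∑ q, (x q * g q (t • x) - x q * g q 0)| ≤ ∑ q, |x q * g q (t • x) - x q * g q 0| :=
          Finset.abs_sum_le_sum_abs _ _
      _ ≤ ∑ q, |x q| * (β * S * t) := by
          refine Finset.sum_le_sum fun q _ => ?_
          rw [← mul_sub, abs_mul]
          exact mul_le_mul_of_nonneg_left (hseg q t ht) (abs_nonneg _)
      _ = (∑ q, |x q|) * (β * S * t) := by rw [← Finset.sum_mul]
      _ = β * S^2 * t := by rw [hSdef]; ring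
  have hint : ∫ t in (0:ℝ)..1, v t = f x - f 0 - fderiv ℝ f 0 x := by
    have := intervalIntegral.integral_eq_sub_of_hasDerivAt
      (f := fun s : ℝ => f (s • x) - s * fderiv ℝ f 0 x) (f' := v)
      (a := 0) (b := 1) (fun t _ => hu t) (hvcont.intervalIntegrable 0 1)
    simp [zero_smul, one_smul] at this
    linarith [this]
  have hbnd : |∫ t in (0:ℝ)..1, v t| ≤ |∫ t in (0:ℝ)..1, β * S^2 * t| := by
    rw [← Real.norm_eq_abs]
    refine intervalIntegral.norm_integral_le_abs_of_norm_le ?_ ?_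
    · refine (MeasureTheory.ae_restrict_iff' measurableSet_uIoc).mpr
        (Filter.Eventually.of_forall fun t ht => ?_)
      rw [Set.uIoc_of_le (by norm_num : (0:ℝ) ≤ 1)] at ht
      exact hvbound t ⟨ht.1.le, ht.2⟩
    · exact (continuous_const.mul continuous_id :
        Continuous fun t : ℝ => β * S^2 * t).intervalIntegrable 0 1
  have hval : ∫ t in (0:ℝ)..1, β * S^2 * t = β * S^2 / 2 := by
    rw [intervalIntegral.integral_const_mul, integral_id]; ring
  rw [← hint]
  calc |∫ t in (0:ℝ)..1, v t| ≤ |∫ t in (0:ℝ)..1, β * S^2 * t| := hbnd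
    _ = β * S^2 / 2 := by rw [hval]; exact abs_of_nonneg (by positivity)
    _ = 1/2 * β * S^2 := by ring

end Aux

set_option maxHeartbeats 1000000 in
/-- (Theorem 2 of the paper: LMI constraint on a ball about the origin.)
Let `θ : ℝⁿ → ℝⁿ` and `ζ : ℝⁿ → ℝᵐ` be `C²` with `θ(0) = 0`, `ζ(0) = 0`, let `ε > 0`,
let `β_ε, μ_ε` bound the second partials of the components of `θ, ζ` on the closed ball
`B_ε(0)`, and let `J_θ(0), J_ζ(0)` be the Jacobians at the origin. If the block matrix
`M_ε = [[½(J_θ(0)ᵀ + J_θ(0) + (ε n^{3/2} β_ε + ε² n² m μ_ε²) I_n), J_ζ(0)ᵀ],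
[J_ζ(0), −½ I_m]]` is negative semidefinite, then
`ζ(x)ᵀζ(x) + ½(xᵀθ(x) + θ(x)ᵀx) ≤ 0` for all `x ∈ B_ε(0)`. -/
theorem lmi_constraint_on_ball_about_origin
    {n m : ℕ}
    (θ : (Fin n → ℝ) → (Fin n → ℝ)) (ζ : (Fin n → ℝ) → (Fin m → ℝ))
    (hθ : ContDiff ℝ 2 θ) (hζ : ContDiff ℝ 2 ζ)
    (hθ0 : θ 0 = 0) (hζ0 : ζ 0 = 0)
    (ε : ℝ) (hε : 0 < ε)
    (βε : ℝ)
    (hβε : ∀ (p q r : Fin n), ∀ ξ : Fin n → ℝ, enorm2 ξ ≤ ε →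
      |pd2 (fun z => θ z p) q r ξ| ≤ βε)
    (με : ℝ)
    (hμε : ∀ (p : Fin m) (q r : Fin n), ∀ ξ : Fin n → ℝ, enorm2 ξ ≤ ε →
      |pd2 (fun z => ζ z p) q r ξ| ≤ με)
    (Jθ : Matrix (Fin n) (Fin n) ℝ)
    (hJθ : ∀ p q, Jθ p q = fderiv ℝ (fun z => θ z p) 0 (Pi.single q 1))
    (Jζ : Matrix (Fin m) (Fin n) ℝ)
    (hJζ : ∀ p q, Jζ p q = fderiv ℝ (fun z => ζ z p) 0 (Pi.single q 1))
    (hM : (Matrix.fromBlocks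
        ((1 / 2 : ℝ) • (Jθᵀ + Jθ +
          (ε * (n : ℝ) ^ ((3 : ℝ) / 2) * βε + ε ^ 2 * (n : ℝ) ^ 2 * (m : ℝ) * με ^ 2) • 1))
        Jζᵀ Jζ ((-(1 / 2) : ℝ) • 1)).NegSemidef) :
    ∀ x : Fin n → ℝ, enorm2 x ≤ ε →
      ζ x ⬝ᵥ ζ x + (1 / 2) * (x ⬝ᵥ θ x + θ x ⬝ᵥ x) ≤ 0 := by
  intro x hx
  rcases Nat.eq_zero_or_pos n with hn | hn
  · subst hn
    have hx0 : x = 0 := Subsingleton.elim x 0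
    subst hx0
    rw [hθ0, hζ0]
    simp [dotProduct]
  -- n ≥ 1
  have h0ε : enorm2 (0 : Fin n → ℝ) ≤ ε := by
    simp [enorm2, hε.le]
  set c : ℝ := ε * (n : ℝ) ^ ((3 : ℝ) / 2) * βε + ε ^ 2 * (n : ℝ) ^ 2 * (m : ℝ) * με ^ 2 with hc
  obtain ⟨p0⟩ : Nonempty (Fin n) := ⟨⟨0, hn⟩⟩
  have hβ0 : 0 ≤ βε := le_trans (abs_nonneg _) (hβε p0 p0 p0 0 h0ε)
  -- basic quantities
  set E2 : ℝ := ∑ i, x i ^ 2 with hE2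
  have hE2_0 : 0 ≤ E2 := Finset.sum_nonneg fun _ _ => sq_nonneg _
  set E : ℝ := Real.sqrt E2 with hE
  have hEε : E ≤ ε := hx
  have hE0 : 0 ≤ E := Real.sqrt_nonneg _
  have hEsq : E^2 = E2 := Real.sq_sqrt hE2_0
  have hE2ε : E2 ≤ ε^2 := by nlinarith
  set S : ℝ := ∑ r, |x r| with hS
  have hS0 : 0 ≤ S := Finset.sum_nonneg fun _ _ => abs_nonneg _
  have hCS : S^2 ≤ (n : ℝ) * E2 := by
    have := Finset.sum_mul_sq_le_sq_mul_sq Finset.univ (fun _ : Fin n => (1:ℝ)) (fun i => |x i|)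
    simpa [hS, hE2, sq_abs] using this
  -- segment stays in the ball
  have hseg : ∀ t : ℝ, t ∈ Set.Icc (0:ℝ) 1 → enorm2 (t • x) ≤ ε := by
    intro t ht
    have h1 : (∑ i, (t • x) i ^ 2) = t^2 * ∑ i, x i ^ 2 := by
      simp [Pi.smul_apply, smul_eq_mul, mul_pow, Finset.mul_sum]
    rw [enorm2, h1, Real.sqrt_mul (sq_nonneg t), Real.sqrt_sq_eq_abs]
    have habs : |t| ≤ 1 := abs_le.mpr ⟨by linarith [ht.1], ht.2⟩
    calc |t| * Real.sqrt (∑ i, x i ^ 2) ≤ 1 * Real.sqrt (∑ i, x i ^ 2) :=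
          mul_le_mul_of_nonneg_right habs (Real.sqrt_nonneg _)
      _ = Real.sqrt (∑ i, x i ^ 2) := one_mul _
      _ ≤ ε := hx
  -- Taylor bounds for components of θ
  have hRθ : ∀ p, |θ x p - (Jθ *ᵥ x) p| ≤ 1/2 * βε * S^2 := by
    intro p
    have hcomp : ContDiff ℝ 2 fun z => θ z p := contDiff_pi.mp hθ p
    have ht := aux_taylor_bound (fun z => θ z p) hcomp x βε hβ0
      (fun q r t hsegt => hβε p q r (t • x) (hseg t hsegt))
    have hz : θ 0 p = 0 := by rw [hθ0]; rfl
    have hfd : fderiv ℝ (fun z => θ z p) 0 x = (Jθ *ᵥ x) p := by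
      rw [aux_clm_apply_eq_sum]
      simp only [Matrix.mulVec, dotProduct]
      exact Finset.sum_congr rfl fun q _ => by simp only [hJθ]; ring
    rw [hz, hfd, sub_zero] at ht
    exact ht
  -- Taylor bounds for components of ζ
  have hSζ : ∀ p, |ζ x p - (Jζ *ᵥ x) p| ≤ 1/2 * με * S^2 := by
    intro p
    have hμ0 : 0 ≤ με := le_trans (abs_nonneg _) (hμε p p0 p0 0 h0ε)
    have hcomp : ContDiff ℝ 2 fun z => ζ z p := contDiff_pi.mp hζ p
    have ht := aux_taylor_bound (fun z => ζ z p) hcomp x με hμ0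
      (fun q r t hsegt => hμε p q r (t • x) (hseg t hsegt))
    have hz : ζ 0 p = 0 := by rw [hζ0]; rfl
    have hfd : fderiv ℝ (fun z => ζ z p) 0 x = (Jζ *ᵥ x) p := by
      rw [aux_clm_apply_eq_sum]
      simp only [Matrix.mulVec, dotProduct]
      exact Finset.sum_congr rfl fun q _ => by simp only [hJζ]; ring
    rw [hz, hfd, sub_zero] at ht
    exact ht
  set a : Fin m → ℝ := Jζ *ᵥ x with ha
  set s : Fin m → ℝ := fun p => ζ x p - a p with hsv
  set Rθ : Fin n → ℝ := fun p => θ x p - (Jθ *ᵥ x) p with hRv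
  -- PSD key inequality
  have key : x ⬝ᵥ (Jθ *ᵥ x) + c/2 * (x ⬝ᵥ x) + 2 * (a ⬝ᵥ a) ≤ 0 := by
    have hpsd := Matrix.PosSemidef.dotProduct_mulVec_nonneg hM (Sum.elim x ((2:ℝ) • a))
    rw [star_trivial, Matrix.neg_mulVec, dotProduct_neg] at hpsd
    rw [Matrix.fromBlocks_mulVec, sumElim_dotProduct_sumElim] at hpsd
    simp only [Sum.elim_comp_inl, Sum.elim_comp_inr, Matrix.add_mulVec,
      Matrix.smul_mulVec, Matrix.one_mulVec, dotProduct_add,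
      dotProduct_smul, smul_eq_mul, Matrix.mulVec_smul,
      smul_dotProduct] at hpsd
    rw [aux_dot_transpose Jζ x a, aux_dot_transpose Jθ x x, ← ha,
      dotProduct_comm (Jθ *ᵥ x) x] at hpsd
    linarith [hpsd]
  -- decomposition identities
  have hxx : x ⬝ᵥ x = E2 := by
    simp [dotProduct, hE2, sq]
  have hzeta : ζ x = a + s := by funext p; simp [hsv]
  have hθeq : θ x = (Jθ *ᵥ x) + Rθ := by funext p; simp [hRv]
  have hζζ : ζ x ⬝ᵥ ζ x = a ⬝ᵥ a + 2 * (s ⬝ᵥ a) + s ⬝ᵥ s := by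
    rw [hzeta, add_dotProduct, dotProduct_add, dotProduct_add,
      dotProduct_comm a s]
    ring
  have hcs2 : 2 * (s ⬝ᵥ a) ≤ a ⬝ᵥ a + s ⬝ᵥ s := by
    have h := aux_dot_self_nonneg (a - s)
    simp only [sub_dotProduct, dotProduct_sub, dotProduct_comm a s] at h
    linarith
  have hxθ : x ⬝ᵥ θ x = x ⬝ᵥ (Jθ *ᵥ x) + x ⬝ᵥ Rθ := by
    rw [hθeq, dotProduct_add]
  have hθx : θ x ⬝ᵥ x = x ⬝ᵥ θ x := dotProduct_comm _ _
  -- bound on x ⬝ᵥ Rθ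
  have hxR : x ⬝ᵥ Rθ ≤ 1/2 * βε * S^3 := by
    calc x ⬝ᵥ Rθ ≤ |x ⬝ᵥ Rθ| := le_abs_self _
      _ ≤ ∑ p, |x p * Rθ p| := Finset.abs_sum_le_sum_abs _ _
      _ ≤ ∑ p, |x p| * (1/2 * βε * S^2) := by
          refine Finset.sum_le_sum fun p _ => ?_
          rw [abs_mul]
          exact mul_le_mul_of_nonneg_left (hRθ p) (abs_nonneg _)
      _ = (∑ p, |x p|) * (1/2 * βε * S^2) := by rw [← Finset.sum_mul]
      _ = 1/2 * βε * S^3 := by rw [← hS]; ring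
  -- bound on s ⬝ᵥ s
  have hss : s ⬝ᵥ s ≤ (m : ℝ) * (1/2 * με * S^2)^2 := by
    calc s ⬝ᵥ s = ∑ p, s p * s p := rfl
      _ ≤ ∑ p : Fin m, (1/2 * με * S^2)^2 := by
          refine Finset.sum_le_sum fun p _ => ?_
          have h1 : s p * s p = |s p|^2 := by rw [sq_abs]; ring
          rw [h1]
          exact pow_le_pow_left₀ (abs_nonneg _) (hSζ p) 2
      _ = (m : ℝ) * (1/2 * με * S^2)^2 := by
          simp [Finset.sum_const, Finset.card_univ]
  -- rpow identity
  have hrpow : (n : ℝ) ^ ((3 : ℝ)/2) = Real.sqrt (n : ℝ) ^ 3 := by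
    rw [Real.sqrt_eq_rpow, ← Real.rpow_natCast ((n:ℝ) ^ (1/(2:ℝ) : ℝ)) 3,
      ← Real.rpow_mul (Nat.cast_nonneg n)]
    norm_num
  -- S ≤ √n * E
  have hSsqrt : S ≤ Real.sqrt (n : ℝ) * E := by
    have h1 : S = Real.sqrt (S^2) := (Real.sqrt_sq hS0).symm
    rw [h1, hE, ← Real.sqrt_mul (Nat.cast_nonneg n)]
    exact Real.sqrt_le_sqrt hCS
  have hsqrtn0 : 0 ≤ Real.sqrt (n : ℝ) := Real.sqrt_nonneg _
  -- S^3 bound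
  have hS3 : S^3 ≤ Real.sqrt (n : ℝ) ^ 3 * (ε * E2) := by
    have h1 : S^3 ≤ (Real.sqrt (n : ℝ) * E)^3 := pow_le_pow_left₀ hS0 hSsqrt 3
    have h2 : E^3 ≤ ε * E2 := by nlinarith
    calc S^3 ≤ (Real.sqrt (n : ℝ) * E)^3 := h1
      _ = Real.sqrt (n : ℝ) ^ 3 * E^3 := by ring
      _ ≤ Real.sqrt (n : ℝ) ^ 3 * (ε * E2) := by
          exact mul_le_mul_of_nonneg_left h2 (by positivity)
  -- S^4 bound
  have hS4 : S^4 ≤ (n : ℝ)^2 * (ε^2 * E2) := by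
    have h1 : S^4 = (S^2)^2 := by ring
    have h2 : (S^2)^2 ≤ ((n:ℝ) * E2)^2 := pow_le_pow_left₀ (sq_nonneg _) hCS 2
    have h3 : ((n:ℝ) * E2)^2 = (n:ℝ)^2 * (E2 * E2) := by ring
    have h4 : E2 * E2 ≤ ε^2 * E2 := mul_le_mul_of_nonneg_right hE2ε hE2_0
    calc S^4 = (S^2)^2 := h1
      _ ≤ ((n:ℝ) * E2)^2 := h2
      _ = (n:ℝ)^2 * (E2 * E2) := h3
      _ ≤ (n:ℝ)^2 * (ε^2 * E2) := mul_le_mul_of_nonneg_left h4 (by positivity)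
  -- combine bounds
  have h6 : 1/2 * βε * S^3 ≤ 1/2 * (ε * (n : ℝ) ^ ((3 : ℝ)/2) * βε) * E2 := by
    rw [hrpow]
    have h := mul_le_mul_of_nonneg_left hS3 (by positivity : (0:ℝ) ≤ 1/2 * βε)
    linarith only [h]
  have h7 : 2 * ((m : ℝ) * (1/2 * με * S^2)^2) ≤ 1/2 * (ε^2 * (n:ℝ)^2 * (m:ℝ) * με^2) * E2 := by
    have hm0 : (0:ℝ) ≤ (m:ℝ) * με^2 := by positivity
    have h := mul_le_mul_of_nonneg_left hS4 hm0
    linarith only [h]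
  have hcE : c/2 * E2 = 1/2 * (ε * (n : ℝ) ^ ((3 : ℝ)/2) * βε) * E2
      + 1/2 * (ε^2 * (n:ℝ)^2 * (m:ℝ) * με^2) * E2 := by
    rw [hc]; ring
  rw [hxx] at key
  linarith only [hζζ, hcs2, hxθ, hθx, hxR, hss, key, h6, h7, hcE]
end

section
/- Let σ = co{x₀, …, xₙ} ⊂ ℝⁿ be an n-simplex, and let f : U → ℝⁿ, g : U → ℝ^{n×m} (with columns g₁, …, g_m), and h : U → ℝᵖ be twice continuously differentiable on an open set U containing σ. Let β ≥ max over p,q,r ∈ {1,…,n} and ξ ∈ σ of |∂²f⁽ᵖ⁾/∂x⁽q⁾∂x⁽r⁾(ξ)|; for a ∈ {1,…,p} let ρ_a ≥ max over q,r and ξ ∈ σ of |∂²h⁽ᵃ⁾/∂x⁽q⁾∂x⁽r⁾(ξ)|; for k ∈ {1,…,m} let μ_k ≥ max over p,q,r and ξ ∈ σ of |∂²g_k⁽ᵖ⁾/∂x⁽q⁾∂x⁽r⁾(ξ)|. Let v ∈ ℝⁿ, l ≥ ‖v‖₁, α > 0, and c_j = n · max_{υ ∈ {0,…,n}} ‖x_j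 − x_υ‖₂². Suppose that for every vertex x_j, j = 0, …, n, the symmetric (1+m+p+m)×(1+m+p+m) block matrix M_j = [[vᵀf(x_j) + (1/2)(β c_j l + Σ_{a=1}^{p} ρ_a² c_j²), vᵀg(x_j), h(x_j)ᵀ, l c_j (μ₁, …, μ_m)], [g(x_j)ᵀv, −2αI_m + (1/2)I_m, 0, 0], [h(x_j), 0, −(3/2)I_p, 0], [l c_j (μ₁, …, μ_m)ᵀ, 0, 0, −2I_m]] is negative semidefinite. Then for every x ∈ σ the gain LMI [[vᵀf(x), vᵀg(x), h(x)ᵀ], [g(x)ᵀv, −2αI_m, 0], [h(x), 0, −2I_p]] is negative semidefinite. -/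
open Matrix

set_option maxHeartbeats 1000000

section helpers

lemma wjensen {ι : Type*} [Fintype ι] (w t : ι → ℝ) (hw : ∀ i, 0 ≤ w i)
    (hw1 : ∑ i, w i = 1) : (∑ i, w i * t i) ^ 2 ≤ ∑ i, w i * t i ^ 2 := by
  have h0 : 0 ≤ ∑ i, w i * (t i - (∑ j, w j * t j)) ^ 2 :=
    Finset.sum_nonneg fun i _ => mul_nonneg (hw i) (sq_nonneg _)
  have hexp : ∑ i, w i * (t i - (∑ j, w j * t j)) ^ 2
      = (∑ i, w i * t i ^ 2) - (∑ i, w i * t i) ^ 2 := by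
    have hper : ∀ i ∈ Finset.univ, w i * (t i - (∑ j, w j * t j)) ^ 2
        = w i * t i ^ 2 - (2 * (∑ j, w j * t j)) * (w i * t i)
          + ((∑ j, w j * t j) ^ 2) * w i := fun i _ => by ring
    rw [Finset.sum_congr rfl hper, Finset.sum_add_distrib, Finset.sum_sub_distrib,
      ← Finset.mul_sum, ← Finset.mul_sum, hw1]
    ring
  rw [hexp] at h0
  linarith

lemma clm_apply_eq_sum {n : ℕ} (L : (Fin n → ℝ) →L[ℝ] ℝ) (d : Fin n → ℝ) :
    L d = ∑ q, d q * L (Pi.single q 1) := by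
  have hd : d = ∑ q, d q • (Pi.single q 1 : Fin n → ℝ) := by
    ext i
    simp [Finset.sum_apply, Pi.single_apply]
  conv_lhs => rw [hd]
  rw [map_sum]
  exact Finset.sum_congr rfl fun q _ => by
    rw [ContinuousLinearMap.map_smul]; simp

lemma taylor2_bound {n : ℕ} {U : Set (Fin n → ℝ)} (hU : IsOpen U)
    {φ : (Fin n → ℝ) → ℝ} (hφ : ContDiffOn ℝ 2 φ U)
    {a b : Fin n → ℝ} (hseg : segment ℝ a b ⊆ U)
    {B : ℝ} (hbd : ∀ q r, ∀ ξ ∈ segment ℝ a b, |pd2 φ q r ξ| ≤ B) :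
    |φ b - φ a - fderiv ℝ φ a (b - a)| ≤ B / 2 * (∑ q, |b q - a q|) ^ 2 := by
  set d : Fin n → ℝ := b - a with hd
  set γ : ℝ → (Fin n → ℝ) := fun t => a + t • d with hγdef
  have hsegmem : ∀ t ∈ Set.Icc (0:ℝ) 1, γ t ∈ segment ℝ a b := by
    intro t ht
    rw [segment_eq_image']
    exact ⟨t, ht, rfl⟩
  have hmem : ∀ t ∈ Set.Icc (0:ℝ) 1, γ t ∈ U := fun t ht => hseg (hsegmem t ht)
  have hγ : ∀ t : ℝ, HasDerivAt γ d t := by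
    intro t
    have := ((hasDerivAt_id t).smul_const d).const_add a
    simp only [one_smul] at this
    exact this
  have hdφ : ∀ z ∈ U, DifferentiableAt ℝ φ z := fun z hz =>
    (hφ.differentiableOn (by norm_num)).differentiableAt (hU.mem_nhds hz)
  have hφ1 : ContDiffOn ℝ 1 (fderiv ℝ φ) U :=
    hφ.fderiv_of_isOpen hU (by norm_num)
  have hdφ1q : ∀ (q : Fin n), ∀ z ∈ U,
      DifferentiableAt ℝ (fun y => fderiv ℝ φ y (Pi.single q 1)) z := by
    intro q z hz
    have : ContDiffOn ℝ 1 (fun y => fderiv ℝ φ y (Pi.single q 1)) U :=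
      hφ1.clm_apply contDiffOn_const
    exact (this.differentiableOn (by norm_num)).differentiableAt (hU.mem_nhds hz)
  set ψ : ℝ → ℝ := fun t => φ (γ t) with hψdef
  set ψ' : ℝ → ℝ := fun t => fderiv ℝ φ (γ t) d with hψ'def
  set ψ'' : ℝ → ℝ := fun t => ∑ q, d q * ∑ r, d r * pd2 φ q r (γ t) with hψ''def
  have hψderiv : ∀ t ∈ Set.Icc (0:ℝ) 1, HasDerivAt ψ (ψ' t) t := by
    intro t ht
    exact ((hdφ _ (hmem t ht)).hasFDerivAt.comp_hasDerivAt t (hγ t))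
  have hψ'eq : ψ' = fun t => ∑ q, d q * (fderiv ℝ φ (γ t) (Pi.single q 1)) := by
    funext t
    exact clm_apply_eq_sum (fderiv ℝ φ (γ t)) d
  have hψ'deriv : ∀ t ∈ Set.Icc (0:ℝ) 1, HasDerivAt ψ' (ψ'' t) t := by
    intro t ht
    rw [hψ'eq]
    have : HasDerivAt (fun s => ∑ q, d q * (fderiv ℝ φ (γ s) (Pi.single q 1)))
        (∑ q, d q * (fderiv ℝ (fun y => fderiv ℝ φ y (Pi.single q 1)) (γ t) d)) t := by
      apply HasDerivAt.fun_sum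
      intro q _
      exact (((hdφ1q q _ (hmem t ht)).hasFDerivAt.comp_hasDerivAt t (hγ t))).const_mul (d q)
    convert this using 1
    apply Finset.sum_congr rfl
    intro q _
    congr 1
    exact (clm_apply_eq_sum (fderiv ℝ (fun y => fderiv ℝ φ y (Pi.single q 1)) (γ t)) d).symm
  have hγcd : ContDiff ℝ 1 γ := contDiff_const.add (contDiff_id.smul contDiff_const)
  have hψcd : ContDiffOn ℝ 1 ψ (Set.Icc 0 1) := by
    apply (hφ.of_le (by norm_num)).comp hγcd.contDiffOn
    intro t ht
    exact hmem t ht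
  have hud : UniqueDiffOn ℝ (Set.Icc (0:ℝ) 1) := uniqueDiffOn_Icc zero_lt_one
  have hdw : ∀ t ∈ Set.Icc (0:ℝ) 1, derivWithin ψ (Set.Icc 0 1) t = ψ' t := by
    intro t ht
    exact (hψderiv t ht).hasDerivWithinAt.derivWithin (hud t ht)
  have hiter1 : ∀ t ∈ Set.Icc (0:ℝ) 1, iteratedDerivWithin 1 ψ (Set.Icc 0 1) t = ψ' t := by
    intro t ht
    rw [iteratedDerivWithin_one]
    exact hdw t ht
  have hdiff' : DifferentiableOn ℝ (iteratedDerivWithin 1 ψ (Set.Icc 0 1)) (Set.Ioo 0 1) := by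
    apply DifferentiableOn.congr (f := ψ')
    · intro t ht
      exact (hψ'deriv t (Set.mem_Icc_of_Ioo ht)).differentiableAt.differentiableWithinAt
    · intro t ht
      exact hiter1 t (Set.mem_Icc_of_Ioo ht)
  obtain ⟨t', ht', heq⟩ := taylor_mean_remainder_lagrange (n := 1) (x₀ := 0) (x := 1)
    zero_ne_one (by rw [Set.uIcc_of_le zero_le_one]; exact_mod_cast hψcd)
    (by rw [Set.uIcc_of_le zero_le_one, Set.uIoo_of_le zero_le_one]; exact hdiff')
  rw [Set.uIcc_of_le zero_le_one] at heq
  rw [Set.uIoo_of_le zero_le_one] at ht'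
  have htay : taylorWithinEval ψ 1 (Set.Icc 0 1) 0 1 = ψ 0 + ψ' 0 := by
    rw [taylorWithinEval_succ, taylor_within_zero_eval]
    rw [hiter1 0 (by norm_num)]
    norm_num
  have hiter2 : iteratedDerivWithin 2 ψ (Set.Icc 0 1) t' = ψ'' t' := by
    have ht'mem : t' ∈ Set.Icc (0:ℝ) 1 := Set.mem_Icc_of_Ioo ht'
    rw [show (2:ℕ) = 1 + 1 from rfl, iteratedDerivWithin_succ]
    rw [derivWithin_congr hiter1 (hiter1 t' ht'mem)]
    exact (hψ'deriv t' ht'mem).hasDerivWithinAt.derivWithin (hud t' ht'mem)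
  rw [htay, hiter2] at heq
  have hγ0 : γ 0 = a := by simp [hγdef]
  have hγ1 : γ 1 = b := by
    funext i
    simp [hγdef, hd]
  have hkey : φ b - φ a - fderiv ℝ φ a d = ψ'' t' / 2 := by
    have e1 : ψ 1 = φ b := by simp only [hψdef]; rw [hγ1]
    have e0 : ψ 0 = φ a := by simp only [hψdef]; rw [hγ0]
    have e0' : ψ' 0 = fderiv ℝ φ a d := by simp only [hψ'def]; rw [hγ0]
    rw [e1, e0, e0'] at heq
    norm_num [Nat.factorial] at heq
    linarith
  have hbound : |ψ'' t'| ≤ B * (∑ q, |d q|) ^ 2 := by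
    have hγt' : γ t' ∈ segment ℝ a b := hsegmem t' (Set.mem_Icc_of_Ioo ht')
    calc |ψ'' t'| ≤ ∑ q, |d q * ∑ r, d r * pd2 φ q r (γ t')| :=
          Finset.abs_sum_le_sum_abs _ _
      _ ≤ ∑ q, |d q| * (∑ r, |d r| * B) := by
          apply Finset.sum_le_sum
          intro q _
          rw [abs_mul]
          apply mul_le_mul_of_nonneg_left _ (abs_nonneg _)
          calc |∑ r, d r * pd2 φ q r (γ t')| ≤ ∑ r, |d r * pd2 φ q r (γ t')| :=
                Finset.abs_sum_le_sum_abs _ _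
            _ ≤ ∑ r, |d r| * B := by
                apply Finset.sum_le_sum
                intro r _
                rw [abs_mul]
                exact mul_le_mul_of_nonneg_left (hbd q r _ hγt') (abs_nonneg _)
      _ = B * (∑ q, |d q|) ^ 2 := by
          rw [← Finset.sum_mul, ← Finset.sum_mul]
          ring
  have hdq : ∀ q, d q = b q - a q := fun q => rfl
  calc |φ b - φ a - fderiv ℝ φ a (b - a)| = |ψ'' t'| / 2 := by
        rw [← hd, hkey, abs_div]
        norm_num
    _ ≤ B * (∑ q, |d q|) ^ 2 / 2 := by linarith
    _ = B / 2 * (∑ q, |b q - a q|) ^ 2 := by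
        simp only [hdq]
        ring

lemma quad_gen {ι : Type*} [Fintype ι] [DecidableEq ι] (A : ℝ) (u δ : ι → ℝ)
    (z : Fin 1 ⊕ ι → ℝ) :
    z ⬝ᵥ ((Matrix.fromBlocks
      (Matrix.of fun (_ : Fin 1) (_ : Fin 1) => A)
      (Matrix.of fun (_ : Fin 1) q => u q)
      (Matrix.of fun q (_ : Fin 1) => u q)
      (Matrix.diagonal δ)) *ᵥ z)
    = A * (z (Sum.inl 0))^2 + 2 * z (Sum.inl 0) * (∑ i, u i * z (Sum.inr i))
      + ∑ i, δ i * (z (Sum.inr i))^2 := by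
  have hz : z = Sum.elim (fun i => z (Sum.inl i)) (fun i => z (Sum.inr i)) := by
    ext (i | i) <;> rfl
  conv_lhs => rw [hz, Matrix.fromBlocks_mulVec, sumElim_dotProduct_sumElim]
  simp only [Matrix.mulVec, dotProduct, Matrix.of_apply, Fin.sum_univ_one,
    Pi.add_apply, Matrix.diagonal_apply, Finset.mul_sum]
  simp only [Function.comp, Sum.elim_inl, Sum.elim_inr, mul_ite, ite_mul, zero_mul, mul_zero,
    Finset.sum_ite_eq, Finset.mem_univ, if_true]
  rw [mul_add, Finset.mul_sum,
    Finset.sum_congr rfl (fun x _ => (by ring : z (Sum.inr x) * (u x * z (Sum.inl 0) + δ x * z (Sum.inr x)) = z (Sum.inl 0) * (u x * z (Sum.inr x)) + δ x * z (Sum.inr x) ^ 2)),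
    Finset.sum_add_distrib,
    Finset.sum_congr rfl (fun i _ => (by ring : 2 * z (Sum.inl 0) * (u i * z (Sum.inr i)) = z (Sum.inl 0) * (u i * z (Sum.inr i)) + z (Sum.inl 0) * (u i * z (Sum.inr i)))),
    Finset.sum_add_distrib]
  ring

lemma herm_gen {ι : Type*} [Fintype ι] [DecidableEq ι] (A : ℝ) (u δ : ι → ℝ) :
    (Matrix.fromBlocks
      (Matrix.of fun (_ : Fin 1) (_ : Fin 1) => A)
      (Matrix.of fun (_ : Fin 1) q => u q)
      (Matrix.of fun q (_ : Fin 1) => u q)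
      (Matrix.diagonal δ)).IsHermitian := by
  apply Matrix.IsHermitian.fromBlocks
  · ext i j; simp [Matrix.conjTranspose_apply]
  · ext i j; simp [Matrix.conjTranspose_apply]
  · exact Matrix.isHermitian_diagonal _

lemma negsemidef_quad {ι : Type*} [Fintype ι] (M : Matrix ι ι ℝ)
    (hM : M.NegSemidef) (z : ι → ℝ) : z ⬝ᵥ (M *ᵥ z) ≤ 0 := by
  have := hM.dotProduct_mulVec_nonneg z
  rw [star_trivial, Matrix.neg_mulVec, dotProduct_neg] at this
  linarith

lemma negsemidef_of_herm {ι : Type*} [Fintype ι] (M : Matrix ι ι ℝ)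
    (hherm : M.IsHermitian) (hq : ∀ z : ι → ℝ, z ⬝ᵥ (M *ᵥ z) ≤ 0) : M.NegSemidef := by
  refine Matrix.PosSemidef.of_dotProduct_mulVec_nonneg hherm.neg ?_
  · intro z
    rw [star_trivial, Matrix.neg_mulVec, dotProduct_neg]
    linarith [hq z]

end helpers

/-- (Vertex LMI constraints certify the gain LMI on a simplex;
the core of Theorem 3 of the paper.) If the augmented block matrices `M_j` are negative
semidefinite at every vertex `x_j` of the simplex `σ = co{x₀,…,xₙ}`, then the gain LMI
`[[vᵀf(x), vᵀg(x), h(x)ᵀ], [g(x)ᵀv, −2αI_m, 0], [h(x), 0, −2I_p]]` is negative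
semidefinite at every `x ∈ σ`. Here `v` is the constant gradient of the CPA storage
function on `σ`, `l ≥ ‖v‖₁`, and `α = γ²`. -/
theorem vertex_gain_lmi_implies_gain_lmi_on_simplex
    {n m p : ℕ} (hn : 0 < n)
    (x : Fin (n + 1) → (Fin n → ℝ)) (hx : AffineIndependent ℝ x)
    (U : Set (Fin n → ℝ)) (hU : IsOpen U)
    (hσU : convexHull ℝ (Set.range x) ⊆ U)
    (f : (Fin n → ℝ) → (Fin n → ℝ)) (hf : ContDiffOn ℝ 2 f U)
    (g : (Fin n → ℝ) → Matrix (Fin n) (Fin m) ℝ)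
    (hg : ∀ k : Fin m, ContDiffOn ℝ 2 (fun z i => g z i k) U)
    (h : (Fin n → ℝ) → (Fin p → ℝ)) (hh : ContDiffOn ℝ 2 h U)
    (β : ℝ)
    (hβ : ∀ (q r s : Fin n), ∀ ξ ∈ convexHull ℝ (Set.range x),
      |pd2 (fun z => f z q) r s ξ| ≤ β)
    (ρ : Fin p → ℝ)
    (hρ : ∀ (a : Fin p) (q r : Fin n), ∀ ξ ∈ convexHull ℝ (Set.range x),
      |pd2 (fun z => h z a) q r ξ| ≤ ρ a)
    (μ : Fin m → ℝ)
    (hμ : ∀ (k : Fin m) (q r s : Fin n), ∀ ξ ∈ convexHull ℝ (Set.range x),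
      |pd2 (fun z => g z q k) r s ξ| ≤ μ k)
    (v : Fin n → ℝ) (l : ℝ) (hl : ∑ i, |v i| ≤ l)
    (α : ℝ) (hα : 0 < α)
    (c : Fin (n + 1) → ℝ)
    (hc : ∀ j, c j = n * (⨆ υ : Fin (n + 1), enorm2 (x j - x υ) ^ 2))
    (hvertex : ∀ j : Fin (n + 1),
      (Matrix.fromBlocks
        (Matrix.of fun (_ : Fin 1) (_ : Fin 1) =>
          v ⬝ᵥ f (x j) + (1 / 2) * (β * c j * l + ∑ a, ρ a ^ 2 * c j ^ 2))
        (Matrix.of fun (_ : Fin 1) q =>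
          Sum.elim (v ᵥ* g (x j)) (Sum.elim (h (x j)) (fun k => l * c j * μ k)) q)
        (Matrix.of fun q (_ : Fin 1) =>
          Sum.elim (v ᵥ* g (x j)) (Sum.elim (h (x j)) (fun k => l * c j * μ k)) q)
        (Matrix.fromBlocks ((-(2 * α) + 1 / 2 : ℝ) • 1) 0 0
          (Matrix.fromBlocks ((-(3 / 2) : ℝ) • 1) 0 0 ((-2 : ℝ) • 1)))).NegSemidef) :
    ∀ y ∈ convexHull ℝ (Set.range x),
      (Matrix.fromBlocks
        (Matrix.of fun (_ : Fin 1) (_ : Fin 1) => v ⬝ᵥ f y)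
        (Matrix.of fun (_ : Fin 1) q => Sum.elim (v ᵥ* g y) (h y) q)
        (Matrix.of fun q (_ : Fin 1) => Sum.elim (v ᵥ* g y) (h y) q)
        (Matrix.fromBlocks ((-(2 * α) : ℝ) • 1) 0 0 ((-2 : ℝ) • 1))).NegSemidef := by
  intro y hy
  -- the simplex
  set S : Set (Fin n → ℝ) := convexHull ℝ (Set.range x) with hS
  have hxjS : ∀ j, x j ∈ S := fun j => subset_convexHull ℝ _ ⟨j, rfl⟩
  have hyS : y ∈ S := hy
  have hsegS : ∀ j, segment ℝ y (x j) ⊆ S :=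
    fun j => (convex_convexHull ℝ _).segment_subset hyS (hxjS j)
  -- weights
  obtain ⟨s, w0, hw00, hw01, hww⟩ := by
    rw [hS, convexHull_range_eq_exists_affineCombination] at hy
    exact hy
  set w : Fin (n + 1) → ℝ := fun j => if j ∈ s then w0 j else 0 with hwdef
  have hwnn : ∀ j, 0 ≤ w j := by
    intro j
    by_cases hj : j ∈ s <;> simp [hwdef, hj]
    exact hw00 j hj
  have hwsum : ∑ j, w j = 1 := by
    rw [hwdef]
    rw [Finset.sum_ite_mem, Finset.univ_inter]
    exact hw01
  have hwy : ∑ j, w j • x j = y := by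
    rw [← hww, Finset.affineCombination_eq_linear_combination s x w0 hw01, hwdef]
    simp only [ite_smul, zero_smul]
    rw [Finset.sum_ite_mem, Finset.univ_inter]
  -- coordinates of y
  have hyq : ∀ q, y q = ∑ j, w j * x j q := by
    intro q
    rw [← hwy]
    simp [Finset.sum_apply]
  -- c j is an upper bound for the relevant quantity
  have hssq : ∀ j, (∑ q, |x j q - y q|) ^ 2 ≤ c j := by
    intro j
    have hM : ∀ υ, enorm2 (x j - x υ) ^ 2 ≤ ⨆ υ', enorm2 (x j - x υ') ^ 2 := by
      intro υ
      exact le_ciSup (f := fun υ' => enorm2 (x j - x υ') ^ 2) (Set.finite_range _).bddAbove υ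
    have henorm : ∀ υ, enorm2 (x j - x υ) ^ 2 = ∑ q, (x j q - x υ q) ^ 2 := by
      intro υ
      rw [enorm2, Real.sq_sqrt (Finset.sum_nonneg fun q _ => sq_nonneg _)]
      exact Finset.sum_congr rfl fun q _ => by simp
    -- coordinatewise Jensen
    have hcoord : ∀ q, (x j q - y q) ^ 2 ≤ ∑ υ, w υ * (x j q - x υ q) ^ 2 := by
      intro q
      have hrepr : x j q - y q = ∑ υ, w υ * (x j q - x υ q) := by
        rw [hyq q]
        rw [Finset.sum_congr rfl (fun υ _ => (by ring :
          w υ * (x j q - x υ q) = w υ * x j q - w υ * x υ q)),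
          Finset.sum_sub_distrib, ← Finset.sum_mul, hwsum]
        ring
      rw [hrepr]
      exact wjensen w _ hwnn hwsum
    have hsum2 : ∑ q, (x j q - y q) ^ 2 ≤ ⨆ υ', enorm2 (x j - x υ') ^ 2 := by
      calc ∑ q, (x j q - y q) ^ 2 ≤ ∑ q, ∑ υ, w υ * (x j q - x υ q) ^ 2 :=
            Finset.sum_le_sum fun q _ => hcoord q
        _ = ∑ υ, w υ * ∑ q, (x j q - x υ q) ^ 2 := by
            rw [Finset.sum_comm]
            exact Finset.sum_congr rfl fun υ _ => by rw [Finset.mul_sum]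
        _ ≤ ∑ υ, w υ * (⨆ υ', enorm2 (x j - x υ') ^ 2) := by
            apply Finset.sum_le_sum
            intro υ _
            exact mul_le_mul_of_nonneg_left ((henorm υ) ▸ hM υ) (hwnn υ)
        _ = ⨆ υ', enorm2 (x j - x υ') ^ 2 := by
            rw [← Finset.sum_mul, hwsum, one_mul]
    have habs : (∑ q, |x j q - y q|) ^ 2 ≤ n * ∑ q, (x j q - y q) ^ 2 := by
      have hjj := wjensen (fun _ : Fin n => (n : ℝ)⁻¹) (fun q => |x j q - y q|)
        (fun _ => by positivity) (by
          simp [Finset.sum_const]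
          field_simp)
      have hn' : (0:ℝ) < n := by exact_mod_cast hn
      rw [← Finset.mul_sum] at hjj
      simp only [sq_abs] at hjj
      
      calc (∑ q, |x j q - y q|) ^ 2
          = (n:ℝ)^2 * ((n:ℝ)⁻¹ * ∑ q, |x j q - y q|) ^ 2 := by
            field_simp
        _ ≤ (n:ℝ)^2 * ((n:ℝ)⁻¹ * ∑ q, (x j q - y q) ^ 2) := by
            apply mul_le_mul_of_nonneg_left _ (by positivity)
            calc ((n:ℝ)⁻¹ * ∑ q, |x j q - y q|) ^ 2
                ≤ ∑ q, (n:ℝ)⁻¹ * (x j q - y q) ^ 2 := hjj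
              _ = (n:ℝ)⁻¹ * ∑ q, (x j q - y q) ^ 2 := by
                  rw [← Finset.mul_sum]
        _ = n * ∑ q, (x j q - y q) ^ 2 := by
            field_simp
    calc (∑ q, |x j q - y q|) ^ 2 ≤ n * ∑ q, (x j q - y q) ^ 2 := habs
      _ ≤ n * (⨆ υ', enorm2 (x j - x υ') ^ 2) :=
          mul_le_mul_of_nonneg_left hsum2 (by positivity)
      _ = c j := (hc j).symm
  have hcnn : ∀ j, 0 ≤ c j := fun j => le_trans (sq_nonneg _) (hssq j)
  -- nonnegativity of the constants
  have hq0 : Fin n := ⟨0, hn⟩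
  have hβ0 : 0 ≤ β := le_trans (abs_nonneg _) (hβ hq0 hq0 hq0 (x 0) (hxjS 0))
  have hρ0 : ∀ a, 0 ≤ ρ a := fun a => le_trans (abs_nonneg _) (hρ a hq0 hq0 (x 0) (hxjS 0))
  have hμ0 : ∀ k, 0 ≤ μ k := fun k => le_trans (abs_nonneg _) (hμ k hq0 hq0 hq0 (x 0) (hxjS 0))
  have hl0 : 0 ≤ l := le_trans (Finset.sum_nonneg fun i _ => abs_nonneg _) hl
  -- generic Taylor bound
  have hTay : ∀ (φ : (Fin n → ℝ) → ℝ) (B : ℝ), 0 ≤ B → ContDiffOn ℝ 2 φ U →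
      (∀ q r, ∀ ξ ∈ S, |pd2 φ q r ξ| ≤ B) → ∀ j,
      |φ (x j) - φ y - fderiv ℝ φ y (x j - y)| ≤ B / 2 * c j := by
    intro φ B hB hφc hbnd j
    have h1 := taylor2_bound hU hφc (Set.Subset.trans (hsegS j) hσU)
      (fun q r ξ hξ => hbnd q r ξ (hsegS j hξ))
    calc |φ (x j) - φ y - fderiv ℝ φ y (x j - y)|
        ≤ B / 2 * (∑ q, |x j q - y q|) ^ 2 := h1
      _ ≤ B / 2 * c j := mul_le_mul_of_nonneg_left (hssq j) (div_nonneg hB (by norm_num))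
  -- generic convex-combination identity
  have hcomb : ∀ L : (Fin n → ℝ) →L[ℝ] ℝ, ∑ j, w j * L (x j - y) = 0 := by
    intro L
    have h1 : ∑ j, w j * L (x j - y) = L (∑ j, w j • (x j - y)) := by
      rw [map_sum]
      exact Finset.sum_congr rfl fun j _ => by
        rw [ContinuousLinearMap.map_smul]; simp
    rw [h1]
    have h2 : ∑ j, w j • (x j - y) = 0 := by
      have : ∀ j ∈ Finset.univ, w j • (x j - y) = w j • x j - w j • y :=
        fun j _ => smul_sub _ _ _
      rw [Finset.sum_congr rfl this, Finset.sum_sub_distrib, hwy, ← Finset.sum_smul, hwsum,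
        one_smul, sub_self]
    rw [h2, map_zero]
  have hscal : ∀ (φ : (Fin n → ℝ) → ℝ),
      φ y = (∑ j, w j * φ (x j))
        - ∑ j, w j * (φ (x j) - φ y - fderiv ℝ φ y (x j - y)) := by
    intro φ
    have h1 : ∑ j, w j * (φ (x j) - φ y - fderiv ℝ φ y (x j - y))
        = (∑ j, w j * φ (x j)) - (∑ j, w j) * φ y
          - ∑ j, w j * fderiv ℝ φ y (x j - y) := by
      rw [Finset.sum_congr rfl (fun j _ => (by ring :
        w j * (φ (x j) - φ y - fderiv ℝ φ y (x j - y))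
          = w j * φ (x j) - w j * φ y - w j * fderiv ℝ φ y (x j - y))),
        Finset.sum_sub_distrib, Finset.sum_sub_distrib, ← Finset.sum_mul]
    rw [h1, hcomb (fderiv ℝ φ y), hwsum]
    ring
  -- residuals
  obtain ⟨EF, hEFdef⟩ : ∃ EF : Fin (n + 1) → ℝ, EF = fun j =>
    ∑ q, v q * (f (x j) q - f y q - fderiv ℝ (fun z => f z q) y (x j - y)) := ⟨_, rfl⟩
  obtain ⟨EG, hEGdef⟩ : ∃ EG : Fin (n + 1) → Fin m → ℝ, EG = fun j k =>
    ∑ q, v q * (g (x j) q k - g y q k - fderiv ℝ (fun z => g z q k) y (x j - y)) := ⟨_, rfl⟩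
  obtain ⟨EH, hEHdef⟩ : ∃ EH : Fin (n + 1) → Fin p → ℝ, EH = fun j a =>
    h (x j) a - h y a - fderiv ℝ (fun z => h z a) y (x j - y) := ⟨_, rfl⟩
  have hvecsum : ∀ (B : ℝ) (R : Fin n → ℝ), 0 ≤ B → (∀ q, |R q| ≤ B) →
      |∑ q, v q * R q| ≤ l * B := by
    intro B R hB hR
    calc |∑ q, v q * R q| ≤ ∑ q, |v q * R q| := Finset.abs_sum_le_sum_abs _ _
      _ ≤ ∑ q, |v q| * B := by
          apply Finset.sum_le_sum
          intro q _
          rw [abs_mul]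
          exact mul_le_mul_of_nonneg_left (hR q) (abs_nonneg _)
      _ = (∑ q, |v q|) * B := by rw [Finset.sum_mul]
      _ ≤ l * B := mul_le_mul_of_nonneg_right hl hB
  have hEF : ∀ j, |EF j| ≤ l * (β / 2 * c j) := by
    intro j
    rw [hEFdef]
    apply hvecsum _ _ (mul_nonneg (div_nonneg hβ0 (by norm_num)) (hcnn j))
    intro q
    exact hTay (fun z => f z q) β hβ0 (contDiffOn_pi.mp hf q) (fun r s' => hβ q r s') j
  have hEG : ∀ j k, |EG j k| ≤ l * (μ k / 2 * c j) := by
    intro j k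
    rw [hEGdef]
    apply hvecsum _ _ (mul_nonneg (div_nonneg (hμ0 k) (by norm_num)) (hcnn j))
    intro q
    exact hTay (fun z => g z q k) (μ k) (hμ0 k) (contDiffOn_pi.mp (hg k) q)
      (fun r s' => hμ k q r s') j
  have hEH : ∀ j a, |EH j a| ≤ ρ a / 2 * c j := by
    intro j a
    rw [hEHdef]
    exact hTay (fun z => h z a) (ρ a) (hρ0 a) (contDiffOn_pi.mp hh a)
      (fun r s' => hρ a r s') j
  -- weighted expansions
  have swap_weighted : ∀ (F : Fin (n + 1) → Fin n → ℝ),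
      ∑ q, v q * ∑ j, w j * F j q = ∑ j, w j * ∑ q, v q * F j q := by
    intro F
    simp only [Finset.mul_sum]
    rw [Finset.sum_comm]
    exact Finset.sum_congr rfl fun j _ => Finset.sum_congr rfl fun q _ => by ring
  have hfy : v ⬝ᵥ f y = (∑ j, w j * (v ⬝ᵥ f (x j))) - ∑ j, w j * EF j := by
    have hfe : ∀ q, f y q = (∑ j, w j * f (x j) q)
        - ∑ j, w j * (f (x j) q - f y q - fderiv ℝ (fun z => f z q) y (x j - y)) :=
      fun q => hscal (fun z => f z q)
    calc v ⬝ᵥ f y = ∑ q, v q * f y q := rfl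
      _ = ∑ q, (v q * ∑ j, w j * f (x j) q
            - v q * ∑ j, w j * (f (x j) q - f y q - fderiv ℝ (fun z => f z q) y (x j - y))) :=
          Finset.sum_congr rfl fun q _ => by linear_combination (v q) * (hfe q)
      _ = (∑ q, v q * ∑ j, w j * f (x j) q)
            - ∑ q, v q * ∑ j, w j * (f (x j) q - f y q - fderiv ℝ (fun z => f z q) y (x j - y)) :=
          Finset.sum_sub_distrib _ _
      _ = (∑ j, w j * (v ⬝ᵥ f (x j))) - ∑ j, w j * EF j := by
          rw [swap_weighted, swap_weighted, hEFdef]; rfl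
  have hgy : ∀ k, (v ᵥ* g y) k = (∑ j, w j * (v ᵥ* g (x j)) k) - ∑ j, w j * EG j k := by
    intro k
    have hge : ∀ q, g y q k = (∑ j, w j * g (x j) q k)
        - ∑ j, w j * (g (x j) q k - g y q k - fderiv ℝ (fun z => g z q k) y (x j - y)) :=
      fun q => hscal (fun z => g z q k)
    calc (v ᵥ* g y) k = ∑ q, v q * g y q k := rfl
      _ = ∑ q, (v q * ∑ j, w j * g (x j) q k
            - v q * ∑ j, w j * (g (x j) q k - g y q k - fderiv ℝ (fun z => g z q k) y (x j - y))) :=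
          Finset.sum_congr rfl fun q _ => by linear_combination (v q) * (hge q)
      _ = (∑ q, v q * ∑ j, w j * g (x j) q k)
            - ∑ q, v q * ∑ j, w j * (g (x j) q k - g y q k - fderiv ℝ (fun z => g z q k) y (x j - y)) :=
          Finset.sum_sub_distrib _ _
      _ = (∑ j, w j * (v ᵥ* g (x j)) k) - ∑ j, w j * EG j k := by
          rw [swap_weighted, swap_weighted, hEGdef]; rfl
  have hhy : ∀ a, h y a = (∑ j, w j * h (x j) a) - ∑ j, w j * EH j a := by
    rw [hEHdef]
    exact fun a => hscal (fun z => h z a)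
  -- diagonal-form rewrites
  have hDy : (Matrix.fromBlocks ((-(2 * α) : ℝ) • 1) 0 0 ((-2 : ℝ) • 1)
        : Matrix (Fin m ⊕ Fin p) (Fin m ⊕ Fin p) ℝ)
      = Matrix.diagonal (Sum.elim (fun _ => -(2 * α)) (fun _ => (-2 : ℝ))) := by
    rw [Matrix.smul_one_eq_diagonal, Matrix.smul_one_eq_diagonal, Matrix.fromBlocks_diagonal]
  have hDv : (Matrix.fromBlocks ((-(2 * α) + 1 / 2 : ℝ) • 1) 0 0
        (Matrix.fromBlocks ((-(3 / 2) : ℝ) • 1) 0 0 ((-2 : ℝ) • 1))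
        : Matrix (Fin m ⊕ (Fin p ⊕ Fin m)) (Fin m ⊕ (Fin p ⊕ Fin m)) ℝ)
      = Matrix.diagonal (Sum.elim (fun _ => -(2 * α) + 1 / 2)
          (Sum.elim (fun _ => (-(3 / 2) : ℝ)) (fun _ => (-2 : ℝ)))) := by
    rw [Matrix.smul_one_eq_diagonal, Matrix.smul_one_eq_diagonal, Matrix.smul_one_eq_diagonal,
      Matrix.fromBlocks_diagonal, Matrix.fromBlocks_diagonal]
  apply negsemidef_of_herm
  · rw [hDy]
    exact herm_gen _ _ _
  intro z
  rw [hDy, quad_gen]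
  simp only [Fintype.sum_sum_type, Sum.elim_inl, Sum.elim_inr]
  obtain ⟨z0, hz0⟩ : ∃ t : ℝ, z (Sum.inl 0) = t := ⟨_, rfl⟩
  simp only [hz0]
  obtain ⟨zg, hzg⟩ : ∃ zg : Fin m → ℝ, ∀ k, z (Sum.inr (Sum.inl k)) = zg k := ⟨_, fun _ => rfl⟩
  obtain ⟨zh, hzh⟩ : ∃ zh : Fin p → ℝ, ∀ a, z (Sum.inr (Sum.inr a)) = zh a := ⟨_, fun _ => rfl⟩
  simp only [hzg, hzh]
  obtain ⟨ε, hε⟩ : ∃ e : ℝ, e = if 0 ≤ z0 then 1 else -1 := ⟨_, rfl⟩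
  obtain ⟨zμ, hzμ⟩ : ∃ zz : Fin m → ℝ, zz = fun k => ε * |zg k| / 2 := ⟨_, rfl⟩
  have hzμ1 : ∀ k, z0 * zμ k = |z0| * |zg k| / 2 := by
    intro k
    by_cases h0 : 0 ≤ z0
    · simp only [hzμ, hε, if_pos h0]
      rw [abs_of_nonneg h0]; ring
    · simp only [hzμ, hε, if_neg h0]
      rw [abs_of_neg (lt_of_not_ge h0)]; ring
  have hzμ2 : ∀ k, zμ k ^ 2 = zg k ^ 2 / 4 := by
    intro k
    have hε2 : ε ^ 2 = 1 := by
      by_cases h0 : 0 ≤ z0 <;> rw [hε] <;> simp [h0]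
    simp only [hzμ]
    rw [div_pow, mul_pow, hε2, one_mul, sq_abs]
    norm_num
  -- vertex quadratic inequalities
  have hVQ : ∀ j, (v ⬝ᵥ f (x j) + 1 / 2 * (β * c j * l + ∑ a, ρ a ^ 2 * c j ^ 2)) * z0 ^ 2
      + 2 * z0 * (∑ k, (v ᵥ* g (x j)) k * zg k
        + (∑ a, h (x j) a * zh a + ∑ k, (l * c j * μ k) * zμ k))
      + (∑ k, (-(2 * α) + 1 / 2) * zg k ^ 2
        + (∑ a, -(3 / 2) * zh a ^ 2 + ∑ k, -2 * zμ k ^ 2)) ≤ 0 := by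
    intro j
    have hM := hvertex j
    rw [hDv] at hM
    have hq := negsemidef_quad _ hM
      (Sum.elim (fun _ : Fin 1 => z0) (Sum.elim zg (Sum.elim zh zμ)))
    rw [quad_gen] at hq
    simpa only [Fintype.sum_sum_type, Sum.elim_inl, Sum.elim_inr] using hq
  -- interpolated quadratic form
  obtain ⟨TT, hTTdef⟩ : ∃ TT : Fin (n + 1) → ℝ, TT = fun j =>
    (v ⬝ᵥ f (x j) - EF j) * z0 ^ 2
    + 2 * z0 * ((∑ k, ((v ᵥ* g (x j)) k - EG j k) * zg k)
      + ∑ a, (h (x j) a - EH j a) * zh a)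
    + (∑ k, -(2 * α) * zg k ^ 2 + ∑ a, (-2 : ℝ) * zh a ^ 2) := ⟨_, rfl⟩
  have hPf : ∑ j, w j * (v ⬝ᵥ f (x j) - EF j) = v ⬝ᵥ f y := by
    rw [hfy, ← Finset.sum_sub_distrib]
    exact Finset.sum_congr rfl fun j _ => by ring
  have hPg : ∑ j, w j * ∑ k, ((v ᵥ* g (x j)) k - EG j k) * zg k
      = ∑ k, (v ᵥ* g y) k * zg k := by
    have e1 : ∀ j ∈ Finset.univ, w j * ∑ k, ((v ᵥ* g (x j)) k - EG j k) * zg k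
        = ∑ k, (w j * ((v ᵥ* g (x j)) k - EG j k)) * zg k := by
      intro j _
      rw [Finset.mul_sum]
      exact Finset.sum_congr rfl fun k _ => by ring
    rw [Finset.sum_congr rfl e1, Finset.sum_comm]
    refine Finset.sum_congr rfl fun k _ => ?_
    rw [← Finset.sum_mul, hgy k, ← Finset.sum_sub_distrib]
    congr 1
    exact Finset.sum_congr rfl fun j _ => by ring
  have hPh : ∑ j, w j * ∑ a, (h (x j) a - EH j a) * zh a = ∑ a, h y a * zh a := by
    have e1 : ∀ j ∈ Finset.univ, w j * ∑ a, (h (x j) a - EH j a) * zh a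
        = ∑ a, (w j * (h (x j) a - EH j a)) * zh a := by
      intro j _
      rw [Finset.mul_sum]
      exact Finset.sum_congr rfl fun a _ => by ring
    rw [Finset.sum_congr rfl e1, Finset.sum_comm]
    refine Finset.sum_congr rfl fun a _ => ?_
    rw [← Finset.sum_mul, hhy a, ← Finset.sum_sub_distrib]
    congr 1
    exact Finset.sum_congr rfl fun j _ => by ring
  have hTTsum : ∑ j, w j * TT j
      = (∑ j, w j * (v ⬝ᵥ f (x j) - EF j)) * z0 ^ 2
        + 2 * z0 * ((∑ j, w j * ∑ k, ((v ᵥ* g (x j)) k - EG j k) * zg k)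
          + (∑ j, w j * ∑ a, (h (x j) a - EH j a) * zh a))
        + (∑ j, w j) * (∑ k, -(2 * α) * zg k ^ 2 + ∑ a, (-2 : ℝ) * zh a ^ 2) := by
    calc ∑ j, w j * TT j
        = ∑ j, ((w j * (v ⬝ᵥ f (x j) - EF j)) * z0 ^ 2
          + ((2 * z0) * (w j * ∑ k, ((v ᵥ* g (x j)) k - EG j k) * zg k)
            + (2 * z0) * (w j * ∑ a, (h (x j) a - EH j a) * zh a))
          + w j * (∑ k, -(2 * α) * zg k ^ 2 + ∑ a, (-2 : ℝ) * zh a ^ 2)) :=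
          Finset.sum_congr rfl fun j _ => by simp only [hTTdef]; ring
      _ = _ := by
          rw [Finset.sum_add_distrib, Finset.sum_add_distrib, Finset.sum_add_distrib,
            ← Finset.sum_mul, ← Finset.mul_sum, ← Finset.mul_sum, ← Finset.sum_mul]
          ring
  have hstep : v ⬝ᵥ f y * z0 ^ 2
      + 2 * z0 * (∑ k, (v ᵥ* g y) k * zg k + ∑ a, h y a * zh a)
      + (∑ k, -(2 * α) * zg k ^ 2 + ∑ a, (-2 : ℝ) * zh a ^ 2) = ∑ j, w j * TT j := by
    rw [hTTsum, hPf, hPg, hPh, hwsum]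
    ring
  rw [hstep]
  -- per-vertex comparison
  have hTle : ∀ j, TT j ≤ (v ⬝ᵥ f (x j) + 1 / 2 * (β * c j * l + ∑ a, ρ a ^ 2 * c j ^ 2)) * z0 ^ 2
      + 2 * z0 * (∑ k, (v ᵥ* g (x j)) k * zg k
        + (∑ a, h (x j) a * zh a + ∑ k, (l * c j * μ k) * zμ k))
      + (∑ k, (-(2 * α) + 1 / 2) * zg k ^ 2
        + (∑ a, -(3 / 2) * zh a ^ 2 + ∑ k, -2 * zμ k ^ 2)) := by
    intro j
    have h1 : 0 ≤ z0 ^ 2 * (EF j + 1 / 2 * (β * c j * l)) := by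
      apply mul_nonneg (sq_nonneg _)
      have := neg_abs_le (EF j)
      have := hEF j
      linarith
    have h2 : ∀ k, 0 ≤ 2 * z0 * (EG j k * zg k) + 2 * z0 * ((l * c j * μ k) * zμ k) := by
      intro k
      have e1 : |z0 * (EG j k * zg k)| ≤ |z0| * ((l * (μ k / 2 * c j)) * |zg k|) := by
        rw [abs_mul, abs_mul]
        exact mul_le_mul_of_nonneg_left
          (mul_le_mul_of_nonneg_right (hEG j k) (abs_nonneg _)) (abs_nonneg _)
      have e2 := neg_abs_le (z0 * (EG j k * zg k))
      have e3 : 2 * z0 * ((l * c j * μ k) * zμ k) = (l * c j * μ k) * (|z0| * |zg k|) := by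
        rw [show 2 * z0 * ((l * c j * μ k) * zμ k)
            = (l * c j * μ k) * (2 * (z0 * zμ k)) from by ring, hzμ1 k]
        ring
      linarith [e1, e2, e3]
    have h3 : ∀ a, 0 ≤ 2 * z0 * (EH j a * zh a) + z0 ^ 2 * (1 / 2 * (ρ a ^ 2 * c j ^ 2))
        + 1 / 2 * zh a ^ 2 := by
      intro a
      have e1 : |z0 * (EH j a * zh a)| ≤ |z0| * ((ρ a / 2 * c j) * |zh a|) := by
        rw [abs_mul, abs_mul]
        exact mul_le_mul_of_nonneg_left
          (mul_le_mul_of_nonneg_right (hEH j a) (abs_nonneg _)) (abs_nonneg _)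
      have e2 := neg_abs_le (z0 * (EH j a * zh a))
      have e4 : 0 ≤ z0 ^ 2 * (ρ a * c j) ^ 2 - 2 * (|z0| * ((ρ a * c j) * |zh a|)) + zh a ^ 2 := by
        have h5 := sq_nonneg (|z0| * (ρ a * c j) - |zh a|)
        have h6 : (|z0| * (ρ a * c j) - |zh a|) ^ 2
            = |z0| ^ 2 * (ρ a * c j) ^ 2 - 2 * (|z0| * ((ρ a * c j) * |zh a|)) + |zh a| ^ 2 := by
          ring
        rw [h6, sq_abs, sq_abs] at h5
        exact h5
      nlinarith [e1, e2, e4]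
    have hzero : (1 / 2) * (∑ k, zg k ^ 2) - 2 * ∑ k, zμ k ^ 2 = 0 := by
      rw [Finset.sum_congr rfl fun k _ => hzμ2 k, ← Finset.sum_div]
      ring
    have hdiff : ((v ⬝ᵥ f (x j) + 1 / 2 * (β * c j * l + ∑ a, ρ a ^ 2 * c j ^ 2)) * z0 ^ 2
        + 2 * z0 * (∑ k, (v ᵥ* g (x j)) k * zg k
          + (∑ a, h (x j) a * zh a + ∑ k, (l * c j * μ k) * zμ k))
        + (∑ k, (-(2 * α) + 1 / 2) * zg k ^ 2
          + (∑ a, -(3 / 2) * zh a ^ 2 + ∑ k, -2 * zμ k ^ 2))) - TT j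
        = z0 ^ 2 * (EF j + 1 / 2 * (β * c j * l))
          + (∑ k, (2 * z0 * (EG j k * zg k) + 2 * z0 * ((l * c j * μ k) * zμ k)))
          + (∑ a, (2 * z0 * (EH j a * zh a) + z0 ^ 2 * (1 / 2 * (ρ a ^ 2 * c j ^ 2))
            + 1 / 2 * zh a ^ 2))
          + ((1 / 2) * (∑ k, zg k ^ 2) - 2 * ∑ k, zμ k ^ 2) := by
      simp only [hTTdef, sub_mul, add_mul, Finset.sum_add_distrib, Finset.sum_sub_distrib,
        ← Finset.mul_sum]
      ring
    have hsum2 : 0 ≤ ∑ k, (2 * z0 * (EG j k * zg k) + 2 * z0 * ((l * c j * μ k) * zμ k)) :=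
      Finset.sum_nonneg fun k _ => h2 k
    have hsum3 : 0 ≤ ∑ a, (2 * z0 * (EH j a * zh a) + z0 ^ 2 * (1 / 2 * (ρ a ^ 2 * c j ^ 2))
        + 1 / 2 * zh a ^ 2) := Finset.sum_nonneg fun a _ => h3 a
    have : 0 ≤ ((v ⬝ᵥ f (x j) + 1 / 2 * (β * c j * l + ∑ a, ρ a ^ 2 * c j ^ 2)) * z0 ^ 2
        + 2 * z0 * (∑ k, (v ᵥ* g (x j)) k * zg k
          + (∑ a, h (x j) a * zh a + ∑ k, (l * c j * μ k) * zμ k))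
        + (∑ k, (-(2 * α) + 1 / 2) * zg k ^ 2
          + (∑ a, -(3 / 2) * zh a ^ 2 + ∑ k, -2 * zμ k ^ 2))) - TT j := by
      rw [hdiff]
      linarith [h1, hsum2, hsum3, hzero.ge, hzero.le]
    linarith
  calc ∑ j, w j * TT j
      ≤ ∑ j, w j * ((v ⬝ᵥ f (x j) + 1 / 2 * (β * c j * l + ∑ a, ρ a ^ 2 * c j ^ 2)) * z0 ^ 2
        + 2 * z0 * (∑ k, (v ᵥ* g (x j)) k * zg k
          + (∑ a, h (x j) a * zh a + ∑ k, (l * c j * μ k) * zμ k))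
        + (∑ k, (-(2 * α) + 1 / 2) * zg k ^ 2
          + (∑ a, -(3 / 2) * zh a ^ 2 + ∑ k, -2 * zμ k ^ 2))) :=
        Finset.sum_le_sum fun j _ => mul_le_mul_of_nonneg_left (hTle j) (hwnn j)
    _ ≤ 0 := Finset.sum_nonpos fun j _ =>
        mul_nonpos_iff.mpr (Or.inl ⟨hwnn j, hVQ j⟩)
end
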